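/- arXiv:2301.11137 — 2 statements merged into one kernel-verified Lean document; each statement's English description precedes it below -/
import Mathlib

section
/- Let q, x, y₁, y₂, z be complex numbers with |q| < 1. Define H(β₁,β₂,β₃,β₄) = Σ_{n₁,n₂,n₃,n₄ ≥ 0} x^{n₁+n₂+n₃+n₄} y₁^{n₃} y₂^{n₄} z^{n₂} q^{Q(n₁,n₂,n₃,n₄) + β₁n₁ + β₂n₂ + β₃n₃ + β₄n₄} / ((q²;q²)_{n₁}(q²;q²)_{n₂}(q⁴;q⁴)_{n₃}(q⁴;q⁴)_{n₄}). Then: (1) H(1,1,2,4) = H(5,5,6,8) + x(1+z)q·H(5,7,6,8) + xy₁q²·H(7,7,6,8) + x(1+z)q³·H(7,9,10,8) + xy₂q⁴·H(9,9,10,12); (2) H(1,3,2,4) = H(5,5,6,8) + xq·H(5,7,6,8) + xy₁q²·H(7,7,6,8) + x(1+z)q³·H(7,9,10,8) + xy₂q⁴·H(9,9,10,12); (3) H(3,3,2,4) = H(5,5,6,8) + xy₁q²·H(7,7,6,8) + x(1+z)q³·H(7,9,10,8) + xy₂q⁴·H(9,9,10,12); (4) H(3,5,6,4) = H(5,5,6,8)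 + xq³·H(7,9,10,8) + xy₂q⁴·H(9,9,10,12). -/
/-- The finite q-Pochhammer symbol `(a; q)_n = ∏_{k=0}^{n-1} (1 - a q^k)`. -/
noncomputable def qPoch (a q : ℂ) (n : ℕ) : ℂ :=
  ∏ k ∈ Finset.range n, (1 - a * q ^ k)

/-- The quadratic form `Q(n₁,n₂,n₃,n₄)`. -/
def Qform (n₁ n₂ n₃ n₄ : ℕ) : ℕ :=
  4 * Nat.choose n₁ 2 + 6 * Nat.choose n₂ 2 + 4 * Nat.choose n₃ 2 + 8 * Nat.choose n₄ 2 +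
    4 * (n₁ * n₂ + n₁ * n₃ + n₁ * n₄ + n₂ * n₃ + n₂ * n₄ + n₃ * n₄)

/-- The quadruple summation
`H(β₁,β₂,β₃,β₄) = Σ_{n₁,n₂,n₃,n₄ ≥ 0} x^{n₁+n₂+n₃+n₄} y₁^{n₃} y₂^{n₄} z^{n₂}
  q^{Q(n₁,n₂,n₃,n₄) + β₁n₁ + β₂n₂ + β₃n₃ + β₄n₄}
  / ((q²;q²)_{n₁}(q²;q²)_{n₂}(q⁴;q⁴)_{n₃}(q⁴;q⁴)_{n₄})`. -/
noncomputable def Hquad (q x y₁ y₂ z : ℂ) (β₁ β₂ β₃ β₄ : ℕ) : ℂ :=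
  ∑' n : ℕ × ℕ × ℕ × ℕ,
    x ^ (n.1 + n.2.1 + n.2.2.1 + n.2.2.2) * y₁ ^ n.2.2.1 * y₂ ^ n.2.2.2 * z ^ n.2.1 *
      q ^ (Qform n.1 n.2.1 n.2.2.1 n.2.2.2 +
        β₁ * n.1 + β₂ * n.2.1 + β₃ * n.2.2.1 + β₄ * n.2.2.2) /
      (qPoch (q ^ 2) (q ^ 2) n.1 * qPoch (q ^ 2) (q ^ 2) n.2.1 *
        qPoch (q ^ 4) (q ^ 4) n.2.2.1 * qPoch (q ^ 4) (q ^ 4) n.2.2.2)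


lemma qPoch_ne_zero {a c : ℂ} (ha : ‖a‖ < 1) (hc : ‖c‖ ≤ 1) (n : ℕ) :
    qPoch a c n ≠ 0 := by
  rw [qPoch, Finset.prod_ne_zero_iff]
  intro k _
  intro h
  have h1 : (1:ℂ) = a * c ^ k := by linear_combination h
  have : ‖a * c ^ k‖ < 1 := by
    rw [norm_mul, norm_pow]
    calc ‖a‖ * ‖c‖ ^ k ≤ ‖a‖ * 1 := by
          exact mul_le_mul_of_nonneg_left (pow_le_one₀ (norm_nonneg _) hc) (norm_nonneg _)
      _ < 1 := by simpa using ha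
  rw [← h1] at this
  simp at this

lemma qPoch_norm_ge {a c : ℂ} (ha : ‖a‖ < 1) (hc : ‖c‖ ≤ 1) (n : ℕ) :
    (1 - ‖a‖) ^ n ≤ ‖qPoch a c n‖ := by
  rw [qPoch, norm_prod]
  rw [show ((1:ℝ) - ‖a‖) ^ n = ∏ _k ∈ Finset.range n, (1 - ‖a‖) by rw [Finset.prod_const, Finset.card_range]]
  apply Finset.prod_le_prod
  · intro k _; linarith
  · intro k _
    calc (1:ℝ) - ‖a‖ ≤ 1 - ‖a * c ^ k‖ := by
          have : ‖a * c ^ k‖ ≤ ‖a‖ := by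
            rw [norm_mul, norm_pow]
            calc ‖a‖ * ‖c‖ ^ k ≤ ‖a‖ * 1 :=
              mul_le_mul_of_nonneg_left (pow_le_one₀ (norm_nonneg _) hc) (norm_nonneg _)
              _ = ‖a‖ := mul_one _
          linarith
      _ ≤ ‖1 - a * c ^ k‖ := by
          have := norm_sub_norm_le (1:ℂ) (a * c ^ k)
          simpa using this

lemma sq_le_choose (n : ℕ) : n ^ 2 ≤ 4 * Nat.choose n 2 + n := by
  induction n with
  | zero => simp
  | succ k ih =>
    rw [Nat.choose_succ_succ, Nat.choose_one_right]
    nlinarith [ih]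

lemma summable_single {K r : ℝ} (hK : 0 ≤ K) (hr0 : 0 ≤ r) (hr : r < 1) :
    Summable fun n : ℕ => K ^ n * r ^ (n ^ 2) := by
  rcases eq_or_lt_of_le hr0 with h0 | hpos
  · apply summable_of_ne_finset_zero (s := {0})
    intro n hn
    have hn0 : n ≠ 0 := by simpa using hn
    rw [← h0]
    simp [pow_eq_zero_iff, hn0]
  · apply summable_of_ratio_norm_eventually_le (r := 1/2) (by norm_num)
    have ht : Filter.Tendsto (fun n : ℕ => K * r * (r ^ 2) ^ n) Filter.atTop (nhds 0) := by
      simpa using (tendsto_pow_atTop_nhds_zero_of_lt_one (by positivity)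
        (by nlinarith)).const_mul (K * r)
    filter_upwards [ht.eventually_lt_const (show (0:ℝ) < 1/2 by norm_num)] with n hn
    have hfn : ‖K ^ n * r ^ (n ^ 2)‖ = K ^ n * r ^ (n ^ 2) := by
      rw [Real.norm_eq_abs, abs_of_nonneg (by positivity)]
    have hfn1 : ‖K ^ (n+1) * r ^ ((n+1) ^ 2)‖ = K ^ (n+1) * r ^ ((n+1) ^ 2) := by
      rw [Real.norm_eq_abs, abs_of_nonneg (by positivity)]
    rw [hfn, hfn1]
    have key : K ^ (n+1) * r ^ ((n+1) ^ 2) = (K * r * (r^2)^n) * (K ^ n * r ^ (n^2)) := by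
      rw [show (n+1)^2 = n^2 + 2*n + 1 by ring, pow_add, pow_add, pow_succ,
        show ((r:ℝ)^2)^n = r^(2*n) from (pow_mul r 2 n).symm]
      ring
    rw [key]
    exact mul_le_mul (le_of_lt hn) le_rfl (by positivity) (by norm_num)

noncomputable def fT (q x y₁ y₂ z : ℂ) (β₁ β₂ β₃ β₄ : ℕ) (n : ℕ × ℕ × ℕ × ℕ) : ℂ :=
  x ^ (n.1 + n.2.1 + n.2.2.1 + n.2.2.2) * y₁ ^ n.2.2.1 * y₂ ^ n.2.2.2 * z ^ n.2.1 *
    q ^ (Qform n.1 n.2.1 n.2.2.1 n.2.2.2 +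
      β₁ * n.1 + β₂ * n.2.1 + β₃ * n.2.2.1 + β₄ * n.2.2.2) /
    (qPoch (q ^ 2) (q ^ 2) n.1 * qPoch (q ^ 2) (q ^ 2) n.2.1 *
      qPoch (q ^ 4) (q ^ 4) n.2.2.1 * qPoch (q ^ 4) (q ^ 4) n.2.2.2)

lemma exp_ge {β₁ β₂ β₃ β₄ : ℕ} (h₁ : 1 ≤ β₁) (h₂ : 1 ≤ β₂) (h₃ : 1 ≤ β₃) (h₄ : 1 ≤ β₄)
    (n₁ n₂ n₃ n₄ : ℕ) :
    n₁ ^ 2 + n₂ ^ 2 + n₃ ^ 2 + n₄ ^ 2 ≤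
      Qform n₁ n₂ n₃ n₄ + β₁ * n₁ + β₂ * n₂ + β₃ * n₃ + β₄ * n₄ := by
  have c₁ := sq_le_choose n₁
  have c₂ := sq_le_choose n₂
  have c₃ := sq_le_choose n₃
  have c₄ := sq_le_choose n₄
  have b₁ : n₁ ≤ β₁ * n₁ := Nat.le_mul_of_pos_left n₁ h₁
  have b₂ : n₂ ≤ β₂ * n₂ := Nat.le_mul_of_pos_left n₂ h₂
  have b₃ : n₃ ≤ β₃ * n₃ := Nat.le_mul_of_pos_left n₃ h₃
  have b₄ : n₄ ≤ β₄ * n₄ := Nat.le_mul_of_pos_left n₄ h₄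
  unfold Qform
  nlinarith [Nat.zero_le (Nat.choose n₂ 2), Nat.zero_le (Nat.choose n₄ 2),
    Nat.zero_le (n₁ * n₂ + n₁ * n₃ + n₁ * n₄ + n₂ * n₃ + n₂ * n₄ + n₃ * n₄)]

set_option maxHeartbeats 1000000 in
lemma summable_fT {q : ℂ} (x y₁ y₂ z : ℂ) {β₁ β₂ β₃ β₄ : ℕ} (hq : ‖q‖ < 1)
    (h₁ : 1 ≤ β₁) (h₂ : 1 ≤ β₂) (h₃ : 1 ≤ β₃) (h₄ : 1 ≤ β₄) :
    Summable (fT q x y₁ y₂ z β₁ β₂ β₃ β₄) := by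
  have hr0 : (0:ℝ) ≤ ‖q‖ := norm_nonneg q
  set r := ‖q‖ with hrdef
  have hc : 0 < 1 - r ^ 2 := by nlinarith
  set c := 1 - r ^ 2 with hcdef
  set K₁ := ‖x‖ / c with hK₁
  set K₂ := ‖x‖ * ‖z‖ / c with hK₂
  set K₃ := ‖x‖ * ‖y₁‖ / c with hK₃
  set K₄ := ‖x‖ * ‖y₂‖ / c with hK₄
  have hg : Summable (fun n : ℕ × ℕ × ℕ × ℕ =>
      (K₁ ^ n.1 * r ^ (n.1 ^ 2)) * ((K₂ ^ n.2.1 * r ^ (n.2.1 ^ 2)) *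
        ((K₃ ^ n.2.2.1 * r ^ (n.2.2.1 ^ 2)) * (K₄ ^ n.2.2.2 * r ^ (n.2.2.2 ^ 2))))) := by
    have s₁ := summable_single (K := K₁) (by positivity) hr0 hq
    have s₂ := summable_single (K := K₂) (by positivity) hr0 hq
    have s₃ := summable_single (K := K₃) (by positivity) hr0 hq
    have s₄ := summable_single (K := K₄) (by positivity) hr0 hq
    have n1 : ∀ n : ℕ, 0 ≤ K₁ ^ n * r ^ (n ^ 2) := fun n => by positivity
    have n2 : ∀ n : ℕ, 0 ≤ K₂ ^ n * r ^ (n ^ 2) := fun n => by positivity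
    have n3 : ∀ n : ℕ, 0 ≤ K₃ ^ n * r ^ (n ^ 2) := fun n => by positivity
    have n4 : ∀ n : ℕ, 0 ≤ K₄ ^ n * r ^ (n ^ 2) := fun n => by positivity
    exact s₁.mul_of_nonneg (s₂.mul_of_nonneg (s₃.mul_of_nonneg s₄ n3 n4)
      n2 (fun p => mul_nonneg (n3 p.1) (n4 p.2))) n1
      (fun p => mul_nonneg (n2 p.1) (mul_nonneg (n3 p.2.1) (n4 p.2.2)))
  apply Summable.of_norm_bounded hg
  rintro ⟨n₁, n₂, n₃, n₄⟩
  have hq2 : ‖(q:ℂ) ^ 2‖ < 1 := by rw [norm_pow]; nlinarith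
  have hq2' : ‖(q:ℂ) ^ 2‖ ≤ 1 := le_of_lt hq2
  have hq4 : ‖(q:ℂ) ^ 4‖ < 1 := by rw [norm_pow]; nlinarith
  have hq4' : ‖(q:ℂ) ^ 4‖ ≤ 1 := le_of_lt hq4
  have hnorm : ‖fT q x y₁ y₂ z β₁ β₂ β₃ β₄ (n₁, n₂, n₃, n₄)‖ =
      ‖x‖ ^ (n₁ + n₂ + n₃ + n₄) * ‖y₁‖ ^ n₃ * ‖y₂‖ ^ n₄ * ‖z‖ ^ n₂ *
        r ^ (Qform n₁ n₂ n₃ n₄ + β₁ * n₁ + β₂ * n₂ + β₃ * n₃ + β₄ * n₄) /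
      (‖qPoch (q ^ 2) (q ^ 2) n₁‖ * ‖qPoch (q ^ 2) (q ^ 2) n₂‖ *
        ‖qPoch (q ^ 4) (q ^ 4) n₃‖ * ‖qPoch (q ^ 4) (q ^ 4) n₄‖) := by
    simp [fT, norm_div, norm_mul, norm_pow, hrdef]
  rw [hnorm]
  -- lower bound on denominator
  have hden2 : ∀ m : ℕ, c ^ m ≤ ‖qPoch (q ^ 2) (q ^ 2) m‖ := by
    intro m
    have := qPoch_norm_ge hq2 hq2' m
    have he : 1 - ‖(q:ℂ)^2‖ = c := by rw [norm_pow]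
    rwa [he] at this
  have hden4 : ∀ m : ℕ, c ^ m ≤ ‖qPoch (q ^ 4) (q ^ 4) m‖ := by
    intro m
    have h1 := qPoch_norm_ge hq4 hq4' m
    have he : c ≤ 1 - ‖(q:ℂ)^4‖ := by rw [norm_pow]; nlinarith
    calc c ^ m ≤ (1 - ‖(q:ℂ)^4‖) ^ m := pow_le_pow_left₀ (le_of_lt hc) he m
      _ ≤ _ := h1
  have hdenpos : 0 < ‖qPoch (q ^ 2) (q ^ 2) n₁‖ * ‖qPoch (q ^ 2) (q ^ 2) n₂‖ *
      ‖qPoch (q ^ 4) (q ^ 4) n₃‖ * ‖qPoch (q ^ 4) (q ^ 4) n₄‖ := by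
    have p1 := lt_of_lt_of_le (pow_pos hc n₁) (hden2 n₁)
    have p2 := lt_of_lt_of_le (pow_pos hc n₂) (hden2 n₂)
    have p3 := lt_of_lt_of_le (pow_pos hc n₃) (hden4 n₃)
    have p4 := lt_of_lt_of_le (pow_pos hc n₄) (hden4 n₄)
    positivity
  have hdenge : c ^ n₁ * c ^ n₂ * c ^ n₃ * c ^ n₄ ≤
      ‖qPoch (q ^ 2) (q ^ 2) n₁‖ * ‖qPoch (q ^ 2) (q ^ 2) n₂‖ *
      ‖qPoch (q ^ 4) (q ^ 4) n₃‖ * ‖qPoch (q ^ 4) (q ^ 4) n₄‖ := by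
    have hp : ∀ m : ℕ, (0:ℝ) ≤ c ^ m := fun m => le_of_lt (pow_pos hc m)
    gcongr
    · exact hden2 n₁
    · exact hden2 n₂
    · exact hden4 n₃
    · exact hden4 n₄
  have hnum_nonneg : 0 ≤ ‖x‖ ^ (n₁ + n₂ + n₃ + n₄) * ‖y₁‖ ^ n₃ * ‖y₂‖ ^ n₄ * ‖z‖ ^ n₂ *
      r ^ (Qform n₁ n₂ n₃ n₄ + β₁ * n₁ + β₂ * n₂ + β₃ * n₃ + β₄ * n₄) := by positivity
  have hpow : r ^ (Qform n₁ n₂ n₃ n₄ + β₁ * n₁ + β₂ * n₂ + β₃ * n₃ + β₄ * n₄) ≤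
      r ^ (n₁ ^ 2 + n₂ ^ 2 + n₃ ^ 2 + n₄ ^ 2) :=
    pow_le_pow_of_le_one hr0 (le_of_lt hq) (exp_ge h₁ h₂ h₃ h₄ n₁ n₂ n₃ n₄)
  calc ‖x‖ ^ (n₁ + n₂ + n₃ + n₄) * ‖y₁‖ ^ n₃ * ‖y₂‖ ^ n₄ * ‖z‖ ^ n₂ *
        r ^ (Qform n₁ n₂ n₃ n₄ + β₁ * n₁ + β₂ * n₂ + β₃ * n₃ + β₄ * n₄) /
      (‖qPoch (q ^ 2) (q ^ 2) n₁‖ * ‖qPoch (q ^ 2) (q ^ 2) n₂‖ *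
        ‖qPoch (q ^ 4) (q ^ 4) n₃‖ * ‖qPoch (q ^ 4) (q ^ 4) n₄‖)
      ≤ ‖x‖ ^ (n₁ + n₂ + n₃ + n₄) * ‖y₁‖ ^ n₃ * ‖y₂‖ ^ n₄ * ‖z‖ ^ n₂ *
        r ^ (n₁ ^ 2 + n₂ ^ 2 + n₃ ^ 2 + n₄ ^ 2) /
        (c ^ n₁ * c ^ n₂ * c ^ n₃ * c ^ n₄) := by
        apply div_le_div₀ (by positivity) _ (by positivity) hdenge
        exact mul_le_mul_of_nonneg_left hpow (by positivity)
    _ = (K₁ ^ n₁ * r ^ (n₁ ^ 2)) * ((K₂ ^ n₂ * r ^ (n₂ ^ 2)) *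
        ((K₃ ^ n₃ * r ^ (n₃ ^ 2)) * (K₄ ^ n₄ * r ^ (n₄ ^ 2)))) := by
        rw [hK₁, hK₂, hK₃, hK₄]
        rw [div_pow, div_pow, div_pow, div_pow, pow_add, pow_add, pow_add, mul_pow, mul_pow, mul_pow]
        field_simp
        ring

lemma tsum_split {I : Type*} {F G F' : I → ℂ} (cc : ℂ) (i : I → I)
    (hi : Function.Injective i)
    (h0 : ∀ n ∉ Set.range i, F n = G n)
    (hs : ∀ m, F (i m) = G (i m) + cc * F' m)
    (hG : Summable G) (hF' : Summable F') :
    ∑' n, F n = ∑' n, G n + cc * ∑' n, F' n := by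
  set H := fun n => F n - G n with hH
  have hHi : (H ∘ i) = fun m => cc * F' m := by
    funext m
    simp only [hH, Function.comp_apply, hs m]
    ring
  have hHr : ∀ n ∉ Set.range i, H n = 0 := by
    intro n hn
    simp [hH, h0 n hn]
  have hsumH : Summable H := by
    rw [← hi.summable_iff hHr, hHi]
    exact hF'.mul_left cc
  have htH : ∑' n, H n = cc * ∑' n, F' n := by
    rw [← hi.tsum_eq (f := H) (by intro n hn; by_contra hmem; exact hn (hHr n hmem))]
    have : (fun m => H (i m)) = fun m => cc * F' m := hHi
    rw [this, tsum_mul_left]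
  calc ∑' n, F n = ∑' n, (G n + H n) := by
        apply tsum_congr; intro n; simp [hH]
    _ = ∑' n, G n + ∑' n, H n := hG.tsum_add hsumH
    _ = _ := by rw [htH]

lemma one_sub_ne_zero {w : ℂ} (hw : ‖w‖ < 1) : (1 : ℂ) - w ≠ 0 := by
  intro h
  have : (1:ℂ) = w := by linear_combination h
  rw [← this] at hw
  simp at hw

lemma qPoch_succ (a c : ℂ) (m : ℕ) :
    qPoch a c (m + 1) = qPoch a c m * (1 - a * c ^ m) := by
  rw [qPoch, Finset.prod_range_succ, qPoch]

lemma Qform_succ₁ (m n₂ n₃ n₄ : ℕ) :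
    Qform (m + 1) n₂ n₃ n₄ = Qform m n₂ n₃ n₄ + (4 * m + 4 * n₂ + 4 * n₃ + 4 * n₄) := by
  simp only [Qform, Nat.choose_succ_succ, Nat.choose_one_right]
  ring

lemma Qform_succ₂ (n₁ m n₃ n₄ : ℕ) :
    Qform n₁ (m + 1) n₃ n₄ = Qform n₁ m n₃ n₄ + (6 * m + 4 * n₁ + 4 * n₃ + 4 * n₄) := by
  simp only [Qform, Nat.choose_succ_succ, Nat.choose_one_right]
  ring

lemma Qform_succ₃ (n₁ n₂ m n₄ : ℕ) :
    Qform n₁ n₂ (m + 1) n₄ = Qform n₁ n₂ m n₄ + (4 * m + 4 * n₁ + 4 * n₂ + 4 * n₄) := by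
  simp only [Qform, Nat.choose_succ_succ, Nat.choose_one_right]
  ring

lemma Qform_succ₄ (n₁ n₂ n₃ m : ℕ) :
    Qform n₁ n₂ n₃ (m + 1) = Qform n₁ n₂ n₃ m + (8 * m + 4 * n₁ + 4 * n₂ + 4 * n₃) := by
  simp only [Qform, Nat.choose_succ_succ, Nat.choose_one_right]
  ring

section Term

variable {q : ℂ} (x y₁ y₂ z : ℂ) (hq : ‖q‖ < 1)

include hq

lemma hPoch2_ne (n : ℕ) : qPoch (q ^ 2) (q ^ 2) n ≠ 0 := by
  have h2 : ‖(q:ℂ)^2‖ < 1 := by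
    rw [norm_pow]; nlinarith [norm_nonneg q]
  exact qPoch_ne_zero h2 (le_of_lt h2) n

lemma hPoch4_ne (n : ℕ) : qPoch (q ^ 4) (q ^ 4) n ≠ 0 := by
  have h4 : ‖(q:ℂ)^4‖ < 1 := by
    rw [norm_pow]; exact pow_lt_one₀ (norm_nonneg q) hq (by norm_num)
  exact qPoch_ne_zero h4 (le_of_lt h4) n

lemma hfac2_ne (m : ℕ) : (1 : ℂ) - q ^ 2 * (q ^ 2) ^ m ≠ 0 := by
  apply one_sub_ne_zero
  simp only [norm_mul, norm_pow]
  have h1 : ‖q‖ ^ 2 < 1 := pow_lt_one₀ (norm_nonneg q) hq (by norm_num)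
  calc ‖q‖ ^ 2 * (‖q‖ ^ 2) ^ m ≤ ‖q‖ ^ 2 * 1 := by
        apply mul_le_mul_of_nonneg_left (pow_le_one₀ (by positivity) (le_of_lt h1)) (by positivity)
    _ < 1 := by simpa using h1

lemma hfac4_ne (m : ℕ) : (1 : ℂ) - q ^ 4 * (q ^ 4) ^ m ≠ 0 := by
  apply one_sub_ne_zero
  simp only [norm_mul, norm_pow]
  have h1 : ‖q‖ ^ 4 < 1 := pow_lt_one₀ (norm_nonneg q) hq (by norm_num)
  calc ‖q‖ ^ 4 * (‖q‖ ^ 4) ^ m ≤ ‖q‖ ^ 4 * 1 := by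
        apply mul_le_mul_of_nonneg_left (pow_le_one₀ (by positivity) (le_of_lt h1)) (by positivity)
    _ < 1 := by simpa using h1

omit hq in
lemma frac_helper {A B C D u : ℂ} (hD : D ≠ 0) (hu : u ≠ 0)
    (h : A = B + C * u) : A / (D * u) = B / (D * u) + C / D := by
  rw [h]
  field_simp

lemma term_R1 (a b c d m n₂ n₃ n₄ : ℕ) :
    fT q x y₁ y₂ z a b c d (m + 1, n₂, n₃, n₄) =
      fT q x y₁ y₂ z (a + 2) b c d (m + 1, n₂, n₃, n₄) +
        x * q ^ a * fT q x y₁ y₂ z (a + 4) (b + 4) (c + 4) (d + 4) (m, n₂, n₃, n₄) := by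
  have e1 := hPoch2_ne hq m
  have e2 := hPoch2_ne hq n₂
  have e3 := hPoch4_ne hq n₃
  have e4 := hPoch4_ne hq n₄
  have e5 := hfac2_ne hq m
  simp only [fT, qPoch_succ, Qform_succ₁]
  rw [show qPoch (q ^ 2) (q ^ 2) m * (1 - q ^ 2 * (q ^ 2) ^ m) * qPoch (q ^ 2) (q ^ 2) n₂ *
      qPoch (q ^ 4) (q ^ 4) n₃ * qPoch (q ^ 4) (q ^ 4) n₄ =
      (qPoch (q ^ 2) (q ^ 2) m * qPoch (q ^ 2) (q ^ 2) n₂ *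
        qPoch (q ^ 4) (q ^ 4) n₃ * qPoch (q ^ 4) (q ^ 4) n₄) * (1 - q ^ 2 * (q ^ 2) ^ m)
      from by ring, mul_div_assoc']
  have hD : qPoch (q ^ 2) (q ^ 2) m * qPoch (q ^ 2) (q ^ 2) n₂ *
      qPoch (q ^ 4) (q ^ 4) n₃ * qPoch (q ^ 4) (q ^ 4) n₄ ≠ 0 :=
    mul_ne_zero (mul_ne_zero (mul_ne_zero e1 e2) e3) e4
  exact frac_helper hD e5 (by ring)

set_option maxHeartbeats 1000000 in
lemma term_R2 (a b c d n₁ m n₃ n₄ : ℕ) :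
    fT q x y₁ y₂ z a b c d (n₁, m + 1, n₃, n₄) =
      fT q x y₁ y₂ z a (b + 2) c d (n₁, m + 1, n₃, n₄) +
        x * z * q ^ b * fT q x y₁ y₂ z (a + 4) (b + 6) (c + 4) (d + 4) (n₁, m, n₃, n₄) := by
  have e1 := hPoch2_ne hq n₁
  have e2 := hPoch2_ne hq m
  have e3 := hPoch4_ne hq n₃
  have e4 := hPoch4_ne hq n₄
  have e5 := hfac2_ne hq m
  simp only [fT, qPoch_succ, Qform_succ₂]
  rw [show qPoch (q ^ 2) (q ^ 2) n₁ * (qPoch (q ^ 2) (q ^ 2) m * (1 - q ^ 2 * (q ^ 2) ^ m)) *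
      qPoch (q ^ 4) (q ^ 4) n₃ * qPoch (q ^ 4) (q ^ 4) n₄ =
      (qPoch (q ^ 2) (q ^ 2) n₁ * qPoch (q ^ 2) (q ^ 2) m *
        qPoch (q ^ 4) (q ^ 4) n₃ * qPoch (q ^ 4) (q ^ 4) n₄) * (1 - q ^ 2 * (q ^ 2) ^ m)
      from by ring, mul_div_assoc']
  have hD : qPoch (q ^ 2) (q ^ 2) n₁ * qPoch (q ^ 2) (q ^ 2) m *
      qPoch (q ^ 4) (q ^ 4) n₃ * qPoch (q ^ 4) (q ^ 4) n₄ ≠ 0 :=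
    mul_ne_zero (mul_ne_zero (mul_ne_zero e1 e2) e3) e4
  exact frac_helper hD e5 (by ring)

set_option maxHeartbeats 1000000 in
lemma term_R3 (a b c d n₁ n₂ m n₄ : ℕ) :
    fT q x y₁ y₂ z a b c d (n₁, n₂, m + 1, n₄) =
      fT q x y₁ y₂ z a b (c + 4) d (n₁, n₂, m + 1, n₄) +
        x * y₁ * q ^ c * fT q x y₁ y₂ z (a + 4) (b + 4) (c + 4) (d + 4) (n₁, n₂, m, n₄) := by
  have e1 := hPoch2_ne hq n₁
  have e2 := hPoch2_ne hq n₂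
  have e3 := hPoch4_ne hq m
  have e4 := hPoch4_ne hq n₄
  have e5 := hfac4_ne hq m
  simp only [fT, qPoch_succ, Qform_succ₃]
  rw [show qPoch (q ^ 2) (q ^ 2) n₁ * qPoch (q ^ 2) (q ^ 2) n₂ *
      (qPoch (q ^ 4) (q ^ 4) m * (1 - q ^ 4 * (q ^ 4) ^ m)) * qPoch (q ^ 4) (q ^ 4) n₄ =
      (qPoch (q ^ 2) (q ^ 2) n₁ * qPoch (q ^ 2) (q ^ 2) n₂ *
        qPoch (q ^ 4) (q ^ 4) m * qPoch (q ^ 4) (q ^ 4) n₄) * (1 - q ^ 4 * (q ^ 4) ^ m)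
      from by ring, mul_div_assoc']
  have hD : qPoch (q ^ 2) (q ^ 2) n₁ * qPoch (q ^ 2) (q ^ 2) n₂ *
      qPoch (q ^ 4) (q ^ 4) m * qPoch (q ^ 4) (q ^ 4) n₄ ≠ 0 :=
    mul_ne_zero (mul_ne_zero (mul_ne_zero e1 e2) e3) e4
  exact frac_helper hD e5 (by ring)

set_option maxHeartbeats 1000000 in
lemma term_R4 (a b c d n₁ n₂ n₃ m : ℕ) :
    fT q x y₁ y₂ z a b c d (n₁, n₂, n₃, m + 1) =
      fT q x y₁ y₂ z a b c (d + 4) (n₁, n₂, n₃, m + 1) +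
        x * y₂ * q ^ d * fT q x y₁ y₂ z (a + 4) (b + 4) (c + 4) (d + 8) (n₁, n₂, n₃, m) := by
  have e1 := hPoch2_ne hq n₁
  have e2 := hPoch2_ne hq n₂
  have e3 := hPoch4_ne hq n₃
  have e4 := hPoch4_ne hq m
  have e5 := hfac4_ne hq m
  simp only [fT, qPoch_succ, Qform_succ₄]
  rw [show qPoch (q ^ 2) (q ^ 2) n₁ * qPoch (q ^ 2) (q ^ 2) n₂ *
      qPoch (q ^ 4) (q ^ 4) n₃ * (qPoch (q ^ 4) (q ^ 4) m * (1 - q ^ 4 * (q ^ 4) ^ m)) =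
      (qPoch (q ^ 2) (q ^ 2) n₁ * qPoch (q ^ 2) (q ^ 2) n₂ *
        qPoch (q ^ 4) (q ^ 4) n₃ * qPoch (q ^ 4) (q ^ 4) m) * (1 - q ^ 4 * (q ^ 4) ^ m)
      from by ring, mul_div_assoc']
  have hD : qPoch (q ^ 2) (q ^ 2) n₁ * qPoch (q ^ 2) (q ^ 2) n₂ *
      qPoch (q ^ 4) (q ^ 4) n₃ * qPoch (q ^ 4) (q ^ 4) m ≠ 0 :=
    mul_ne_zero (mul_ne_zero (mul_ne_zero e1 e2) e3) e4
  exact frac_helper hD e5 (by ring)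

end Term

section Rel

variable {q : ℂ} (x y₁ y₂ z : ℂ) (hq : ‖q‖ < 1)
include hq

lemma rel1 {a b c d : ℕ} (ha : 1 ≤ a) (hb : 1 ≤ b) (hc : 1 ≤ c) (hd : 1 ≤ d) :
    (∑' n, fT q x y₁ y₂ z a b c d n) =
      (∑' n, fT q x y₁ y₂ z (a + 2) b c d n) +
        x * q ^ a * ∑' n, fT q x y₁ y₂ z (a + 4) (b + 4) (c + 4) (d + 4) n := by
  apply tsum_split (x * q ^ a) (fun p : ℕ × ℕ × ℕ × ℕ => (p.1 + 1, p.2))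
  · intro p p' h
    simp only [Prod.mk.injEq, Nat.add_right_cancel_iff] at h
    exact Prod.ext h.1 h.2
  · rintro ⟨n₁, rest⟩ hn
    match n₁ with
    | 0 => simp [fT]
    | m + 1 => exact absurd ⟨(m, rest), rfl⟩ hn
  · rintro ⟨m, n₂, n₃, n₄⟩
    exact term_R1 x y₁ y₂ z hq a b c d m n₂ n₃ n₄
  · exact summable_fT x y₁ y₂ z hq (by omega) hb hc hd
  · exact summable_fT x y₁ y₂ z hq (by omega) (by omega) (by omega) (by omega)

lemma rel2 {a b c d : ℕ} (ha : 1 ≤ a) (hb : 1 ≤ b) (hc : 1 ≤ c) (hd : 1 ≤ d) :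
    (∑' n, fT q x y₁ y₂ z a b c d n) =
      (∑' n, fT q x y₁ y₂ z a (b + 2) c d n) +
        x * z * q ^ b * ∑' n, fT q x y₁ y₂ z (a + 4) (b + 6) (c + 4) (d + 4) n := by
  apply tsum_split (x * z * q ^ b) (fun p : ℕ × ℕ × ℕ × ℕ => (p.1, p.2.1 + 1, p.2.2))
  · intro p p' h
    simp only [Prod.mk.injEq, Nat.add_right_cancel_iff] at h
    exact Prod.ext h.1 (Prod.ext h.2.1 h.2.2)
  · rintro ⟨n₁, n₂, rest⟩ hn
    match n₂ with
    | 0 => simp [fT]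
    | m + 1 => exact absurd ⟨(n₁, m, rest), rfl⟩ hn
  · rintro ⟨n₁, m, n₃, n₄⟩
    exact term_R2 x y₁ y₂ z hq a b c d n₁ m n₃ n₄
  · exact summable_fT x y₁ y₂ z hq ha (by omega) hc hd
  · exact summable_fT x y₁ y₂ z hq (by omega) (by omega) (by omega) (by omega)

lemma rel3 {a b c d : ℕ} (ha : 1 ≤ a) (hb : 1 ≤ b) (hc : 1 ≤ c) (hd : 1 ≤ d) :
    (∑' n, fT q x y₁ y₂ z a b c d n) =
      (∑' n, fT q x y₁ y₂ z a b (c + 4) d n) +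
        x * y₁ * q ^ c * ∑' n, fT q x y₁ y₂ z (a + 4) (b + 4) (c + 4) (d + 4) n := by
  apply tsum_split (x * y₁ * q ^ c) (fun p : ℕ × ℕ × ℕ × ℕ => (p.1, p.2.1, p.2.2.1 + 1, p.2.2.2))
  · intro p p' h
    simp only [Prod.mk.injEq, Nat.add_right_cancel_iff] at h
    exact Prod.ext h.1 (Prod.ext h.2.1 (Prod.ext h.2.2.1 h.2.2.2))
  · rintro ⟨n₁, n₂, n₃, n₄⟩ hn
    match n₃ with
    | 0 => simp [fT]
    | m + 1 => exact absurd ⟨(n₁, n₂, m, n₄), rfl⟩ hn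
  · rintro ⟨n₁, n₂, m, n₄⟩
    exact term_R3 x y₁ y₂ z hq a b c d n₁ n₂ m n₄
  · exact summable_fT x y₁ y₂ z hq ha hb (by omega) hd
  · exact summable_fT x y₁ y₂ z hq (by omega) (by omega) (by omega) (by omega)

lemma rel4 {a b c d : ℕ} (ha : 1 ≤ a) (hb : 1 ≤ b) (hc : 1 ≤ c) (hd : 1 ≤ d) :
    (∑' n, fT q x y₁ y₂ z a b c d n) =
      (∑' n, fT q x y₁ y₂ z a b c (d + 4) n) +
        x * y₂ * q ^ d * ∑' n, fT q x y₁ y₂ z (a + 4) (b + 4) (c + 4) (d + 8) n := by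
  apply tsum_split (x * y₂ * q ^ d) (fun p : ℕ × ℕ × ℕ × ℕ => (p.1, p.2.1, p.2.2.1, p.2.2.2 + 1))
  · intro p p' h
    simp only [Prod.mk.injEq, Nat.add_right_cancel_iff] at h
    exact Prod.ext h.1 (Prod.ext h.2.1 (Prod.ext h.2.2.1 h.2.2.2))
  · rintro ⟨n₁, n₂, n₃, n₄⟩ hn
    match n₄ with
    | 0 => simp [fT]
    | m + 1 => exact absurd ⟨(n₁, n₂, n₃, m), rfl⟩ hn
  · rintro ⟨n₁, n₂, n₃, m⟩
    exact term_R4 x y₁ y₂ z hq a b c d n₁ n₂ n₃ m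
  · exact summable_fT x y₁ y₂ z hq ha hb hc (by omega)
  · exact summable_fT x y₁ y₂ z hq (by omega) (by omega) (by omega) (by omega)

end Rel

lemma Hquad_eq (q x y₁ y₂ z : ℂ) (β₁ β₂ β₃ β₄ : ℕ) :
    Hquad q x y₁ y₂ z β₁ β₂ β₃ β₄ = ∑' n, fT q x y₁ y₂ z β₁ β₂ β₃ β₄ n := rfl

/-- The recurrences for `H` needed in the proof of Theorem 5.1 (rows of (5.4)). -/
theorem Hquad_recurrences (q x y₁ y₂ z : ℂ) (hq : ‖q‖ < 1) :
    Hquad q x y₁ y₂ z 1 1 2 4 =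
        Hquad q x y₁ y₂ z 5 5 6 8 + x * (1 + z) * q * Hquad q x y₁ y₂ z 5 7 6 8 +
          x * y₁ * q ^ 2 * Hquad q x y₁ y₂ z 7 7 6 8 +
          x * (1 + z) * q ^ 3 * Hquad q x y₁ y₂ z 7 9 10 8 +
          x * y₂ * q ^ 4 * Hquad q x y₁ y₂ z 9 9 10 12 ∧
      Hquad q x y₁ y₂ z 1 3 2 4 =
        Hquad q x y₁ y₂ z 5 5 6 8 + x * q * Hquad q x y₁ y₂ z 5 7 6 8 +
          x * y₁ * q ^ 2 * Hquad q x y₁ y₂ z 7 7 6 8 +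
          x * (1 + z) * q ^ 3 * Hquad q x y₁ y₂ z 7 9 10 8 +
          x * y₂ * q ^ 4 * Hquad q x y₁ y₂ z 9 9 10 12 ∧
      Hquad q x y₁ y₂ z 3 3 2 4 =
        Hquad q x y₁ y₂ z 5 5 6 8 +
          x * y₁ * q ^ 2 * Hquad q x y₁ y₂ z 7 7 6 8 +
          x * (1 + z) * q ^ 3 * Hquad q x y₁ y₂ z 7 9 10 8 +
          x * y₂ * q ^ 4 * Hquad q x y₁ y₂ z 9 9 10 12 ∧
      Hquad q x y₁ y₂ z 3 5 6 4 =
        Hquad q x y₁ y₂ z 5 5 6 8 + x * q ^ 3 * Hquad q x y₁ y₂ z 7 9 10 8 +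
          x * y₂ * q ^ 4 * Hquad q x y₁ y₂ z 9 9 10 12 := by
  simp only [Hquad_eq]
  have h1 : (∑' n, fT q x y₁ y₂ z 3 5 6 4 n) =
      (∑' n, fT q x y₁ y₂ z 5 5 6 4 n) + x * q ^ 3 * ∑' n, fT q x y₁ y₂ z 7 9 10 8 n :=
    rel1 x y₁ y₂ z hq (by norm_num) (by norm_num) (by norm_num) (by norm_num)
  have h2 : (∑' n, fT q x y₁ y₂ z 5 5 6 4 n) =
      (∑' n, fT q x y₁ y₂ z 5 5 6 8 n) + x * y₂ * q ^ 4 * ∑' n, fT q x y₁ y₂ z 9 9 10 12 n :=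
    rel4 x y₁ y₂ z hq (by norm_num) (by norm_num) (by norm_num) (by norm_num)
  have h3 : (∑' n, fT q x y₁ y₂ z 3 3 2 4 n) =
      (∑' n, fT q x y₁ y₂ z 3 3 6 4 n) + x * y₁ * q ^ 2 * ∑' n, fT q x y₁ y₂ z 7 7 6 8 n :=
    rel3 x y₁ y₂ z hq (by norm_num) (by norm_num) (by norm_num) (by norm_num)
  have h4 : (∑' n, fT q x y₁ y₂ z 3 3 6 4 n) =
      (∑' n, fT q x y₁ y₂ z 3 5 6 4 n) + x * z * q ^ 3 * ∑' n, fT q x y₁ y₂ z 7 9 10 8 n :=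
    rel2 x y₁ y₂ z hq (by norm_num) (by norm_num) (by norm_num) (by norm_num)
  have h5 : (∑' n, fT q x y₁ y₂ z 1 3 2 4 n) =
      (∑' n, fT q x y₁ y₂ z 3 3 2 4 n) + x * q ^ 1 * ∑' n, fT q x y₁ y₂ z 5 7 6 8 n :=
    rel1 x y₁ y₂ z hq (by norm_num) (by norm_num) (by norm_num) (by norm_num)
  have h6 : (∑' n, fT q x y₁ y₂ z 1 1 2 4 n) =
      (∑' n, fT q x y₁ y₂ z 1 3 2 4 n) + x * z * q ^ 1 * ∑' n, fT q x y₁ y₂ z 5 7 6 8 n :=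
    rel2 x y₁ y₂ z hq (by norm_num) (by norm_num) (by norm_num) (by norm_num)
  refine ⟨?_, ?_, ?_, ?_⟩
  · linear_combination h6 + h5 + h3 + h4 + h1 + h2
  · linear_combination h5 + h3 + h4 + h1 + h2
  · linear_combination h3 + h4 + h1 + h2
  · linear_combination h1 + h2
end

section
/- Let q, x, y be complex numbers with |q| < 1, |x| ≤ 1, |y| ≤ 1. Then Σ_{n₁,n₂,n₃,n₄ ≥ 0} x^{n₁+n₂+2n₄} y^{n₂+n₃} q^{2C(n₁,2) + 2n₁n₂ + 4n₁n₃ + 4n₃n₄ + n₁ + 3n₂ + 2n₃ + 2n₄} / ((q²;q²)_{n₁}(q²;q²)_{n₂}(q⁴;q⁴)_{n₃}(q⁴;q⁴)_{n₄}) = ((x²yq⁴;q⁴)_∞ / ((x²q²;q⁴)_∞ (xyq³;q²)_∞ (yq²;q⁴)_∞)) · Σ_{n ≥ 0} xⁿ q^{2C(n,2)+n} (xyq³;q²)_n (yq²;q⁴)_n / ((q²;q²)_n (x²yq⁴;q⁴)_n). -/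
/-- The infinite q-Pochhammer symbol `(a; q)_∞ = ∏_{k=0}^{∞} (1 - a q^k)`. -/
noncomputable def qPochInf (a q : ℂ) : ℂ :=
  ∏' k : ℕ, (1 - a * q ^ k)

open Complex Filter Finset

namespace QAux

lemma qPoch_zero_left (q : ℂ) (n : ℕ) : qPoch 0 q n = 1 := by
  simp [qPoch]

lemma qPoch_succ (a q : ℂ) (n : ℕ) : qPoch a q (n + 1) = qPoch a q n * (1 - a * q ^ n) :=
  Finset.prod_range_succ _ _

lemma qPoch_add (a q : ℂ) (m n : ℕ) :
    qPoch a q (m + n) = qPoch a q m * qPoch (a * q ^ m) q n := by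
  rw [qPoch, qPoch, qPoch, Finset.prod_range_add]
  congr 1
  refine Finset.prod_congr rfl fun k _ => ?_
  rw [pow_add]; ring

lemma norm_aqk_lt_one {a q : ℂ} (ha : ‖a‖ < 1) (hq : ‖q‖ ≤ 1) (k : ℕ) : ‖a * q ^ k‖ < 1 := by
  calc ‖a * q ^ k‖ = ‖a‖ * ‖q‖ ^ k := by rw [norm_mul, norm_pow]
    _ ≤ ‖a‖ * 1 := by
        gcongr
        exact pow_le_one₀ (norm_nonneg q) hq
    _ < 1 := by simpa using ha

lemma factor_ne_zero {a q : ℂ} (ha : ‖a‖ < 1) (hq : ‖q‖ ≤ 1) (k : ℕ) : 1 - a * q ^ k ≠ 0 := by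
  intro h
  have h2 : a * q ^ k = 1 := by
    have := sub_eq_zero.mp h
    exact this.symm
  have := norm_aqk_lt_one ha hq k
  rw [h2] at this
  simp at this

lemma qPoch_ne_zero {a q : ℂ} (ha : ‖a‖ < 1) (hq : ‖q‖ ≤ 1) (n : ℕ) : qPoch a q n ≠ 0 :=
  Finset.prod_ne_zero_iff.mpr fun k _ => factor_ne_zero ha hq k

lemma norm_qPoch_le {a q : ℂ} (hq : ‖q‖ < 1) (n : ℕ) :
    ‖qPoch a q n‖ ≤ Real.exp (‖a‖ * (1 - ‖q‖)⁻¹) := by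
  have hq0 : (0:ℝ) ≤ ‖q‖ := norm_nonneg q
  have h1 : ‖qPoch a q n‖ = ∏ k ∈ Finset.range n, ‖1 - a * q ^ k‖ := by
    rw [qPoch]; exact norm_prod _ _
  rw [h1]
  calc ∏ k ∈ Finset.range n, ‖1 - a * q ^ k‖
      ≤ ∏ k ∈ Finset.range n, Real.exp (‖a‖ * ‖q‖ ^ k) := by
        refine Finset.prod_le_prod (fun k _ => norm_nonneg _) fun k _ => ?_
        calc ‖1 - a * q ^ k‖ ≤ ‖(1:ℂ)‖ + ‖a * q ^ k‖ := norm_sub_le _ _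
          _ = 1 + ‖a‖ * ‖q‖ ^ k := by rw [norm_one, norm_mul, norm_pow]
          _ ≤ Real.exp (‖a‖ * ‖q‖ ^ k) := by
              have := Real.add_one_le_exp (‖a‖ * ‖q‖ ^ k)
              linarith
    _ = Real.exp (∑ k ∈ Finset.range n, ‖a‖ * ‖q‖ ^ k) := (Real.exp_sum _ _).symm
    _ ≤ Real.exp (‖a‖ * (1 - ‖q‖)⁻¹) := by
        apply Real.exp_le_exp.mpr
        rw [← Finset.mul_sum]
        gcongr
        · calc ∑ k ∈ Finset.range n, ‖q‖ ^ k ≤ ∑' k : ℕ, ‖q‖ ^ k :=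
              Summable.sum_le_tsum _ (fun k _ => pow_nonneg hq0 k) (summable_geometric_of_lt_one hq0 hq)
            _ = (1 - ‖q‖)⁻¹ := tsum_geometric_of_lt_one hq0 hq

lemma exp_le_one_sub {b t : ℝ} (ht0 : 0 ≤ t) (htb : t ≤ b) (hb : b < 1) :
    Real.exp (-(t / (1 - b))) ≤ 1 - t := by
  have hb1 : (0:ℝ) < 1 - b := by linarith
  set s := t / (1 - b) with hs
  have hs0 : 0 ≤ s := div_nonneg ht0 hb1.le
  have h1 : 1 + s ≤ Real.exp s := by
    have := Real.add_one_le_exp s; linarith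
  have h2 : Real.exp (-s) = (Real.exp s)⁻¹ := Real.exp_neg _
  have hexp : 0 < Real.exp s := Real.exp_pos _
  rw [h2, inv_le_iff_one_le_mul₀ hexp]
  have hkey : 1 ≤ (1 - t) * (1 + s) := by
    have hts : t * (1 - b) ≤ s * (1 - b) * (1 - t) := by
      rw [hs, div_mul_cancel₀ _ hb1.ne']
      nlinarith
    nlinarith
  nlinarith [mul_le_mul_of_nonneg_left h1 (by linarith : (0:ℝ) ≤ 1 - t)]

lemma le_norm_qPoch {a q : ℂ} (ha : ‖a‖ < 1) (hq : ‖q‖ < 1) (n : ℕ) :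
    Real.exp (-(‖a‖ * (1 - ‖q‖)⁻¹ / (1 - ‖a‖))) ≤ ‖qPoch a q n‖ := by
  have hq0 : (0:ℝ) ≤ ‖q‖ := norm_nonneg q
  have ha0 : (0:ℝ) ≤ ‖a‖ := norm_nonneg a
  have h1 : ‖qPoch a q n‖ = ∏ k ∈ Finset.range n, ‖1 - a * q ^ k‖ := by
    rw [qPoch]; exact norm_prod _ _
  rw [h1]
  calc Real.exp (-(‖a‖ * (1 - ‖q‖)⁻¹ / (1 - ‖a‖)))
      ≤ Real.exp (-(∑ k ∈ Finset.range n, ‖a‖ * ‖q‖ ^ k / (1 - ‖a‖))) := by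
        apply Real.exp_le_exp.mpr
        rw [neg_le_neg_iff]
        rw [← Finset.sum_div, ← Finset.mul_sum]
        gcongr
        · calc ∑ k ∈ Finset.range n, ‖q‖ ^ k ≤ ∑' k : ℕ, ‖q‖ ^ k :=
              Summable.sum_le_tsum _ (fun k _ => pow_nonneg hq0 k) (summable_geometric_of_lt_one hq0 hq)
            _ = (1 - ‖q‖)⁻¹ := tsum_geometric_of_lt_one hq0 hq
    _ = ∏ k ∈ Finset.range n, Real.exp (-(‖a‖ * ‖q‖ ^ k / (1 - ‖a‖))) := by
        rw [← Real.exp_sum, ← Finset.sum_neg_distrib]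
    _ ≤ ∏ k ∈ Finset.range n, ‖1 - a * q ^ k‖ := by
        refine Finset.prod_le_prod (fun k _ => (Real.exp_pos _).le) fun k _ => ?_
        have ht0 : (0:ℝ) ≤ ‖a‖ * ‖q‖ ^ k := mul_nonneg ha0 (pow_nonneg hq0 k)
        have htb : ‖a‖ * ‖q‖ ^ k ≤ ‖a‖ := by
          calc ‖a‖ * ‖q‖ ^ k ≤ ‖a‖ * 1 := by
                gcongr; exact pow_le_one₀ hq0 hq.le
            _ = ‖a‖ := mul_one _
        calc Real.exp (-(‖a‖ * ‖q‖ ^ k / (1 - ‖a‖))) ≤ 1 - ‖a‖ * ‖q‖ ^ k :=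
              exp_le_one_sub ht0 htb ha
          _ = ‖(1:ℂ)‖ - ‖a * q ^ k‖ := by rw [norm_one, norm_mul, norm_pow]
          _ ≤ ‖1 - a * q ^ k‖ := norm_sub_norm_le _ _

end QAux

section InfProd

lemma summable_log {a q : ℂ} (ha : ‖a‖ < 1) (hq : ‖q‖ < 1) :
    Summable fun k => Complex.log (1 - a * q ^ k) := by
  have hq0 : (0:ℝ) ≤ ‖q‖ := norm_nonneg q
  have ha0 : (0:ℝ) ≤ ‖a‖ := norm_nonneg a
  set C : ℝ := ‖a‖ * (1 - ‖a‖)⁻¹ / 2 + 1 with hC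
  apply Summable.of_norm_bounded (g := fun k => C * (‖a‖ * ‖q‖ ^ k))
  · exact ((summable_geometric_of_lt_one hq0 hq).mul_left _).mul_left _
  · intro k
    have hk : ‖-(a * q ^ k)‖ < 1 := by
      rw [norm_neg]; exact QAux.norm_aqk_lt_one ha hq.le k
    have h1 : Complex.log (1 - a * q ^ k) = Complex.log (1 + -(a * q ^ k)) := by
      rw [sub_eq_add_neg]
    rw [h1]
    refine le_trans (Complex.norm_log_one_add_le hk) ?_
    have hn : ‖-(a * q ^ k)‖ = ‖a‖ * ‖q‖ ^ k := by
      rw [norm_neg, norm_mul, norm_pow]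
    rw [hn]
    have h2 : ‖a‖ * ‖q‖ ^ k ≤ ‖a‖ := by
      calc ‖a‖ * ‖q‖ ^ k ≤ ‖a‖ * 1 := by gcongr; exact pow_le_one₀ hq0 hq.le
        _ = ‖a‖ := mul_one _
    have h3 : (1 - ‖a‖ * ‖q‖ ^ k)⁻¹ ≤ (1 - ‖a‖)⁻¹ := by
      apply inv_anti₀ <;> linarith
    have h4 : (‖a‖ * ‖q‖ ^ k) ^ 2 * (1 - ‖a‖ * ‖q‖ ^ k)⁻¹ / 2 ≤
        (‖a‖ * ‖q‖ ^ k) * (‖a‖ * (1 - ‖a‖)⁻¹ / 2) := by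
      have h5 : (‖a‖ * ‖q‖ ^ k) ^ 2 = (‖a‖ * ‖q‖ ^ k) * (‖a‖ * ‖q‖ ^ k) := sq _
      have h6 : (0:ℝ) ≤ ‖a‖ * ‖q‖ ^ k := mul_nonneg ha0 (pow_nonneg hq0 k)
      have h7 : (0:ℝ) ≤ (1 - ‖a‖ * ‖q‖ ^ k)⁻¹ := by
        apply inv_nonneg.mpr
        nlinarith [QAux.norm_aqk_lt_one ha hq.le k, norm_mul a (q ^ k)]
      calc (‖a‖ * ‖q‖ ^ k) ^ 2 * (1 - ‖a‖ * ‖q‖ ^ k)⁻¹ / 2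
          ≤ (‖a‖ * ‖q‖ ^ k) * ‖a‖ * (1 - ‖a‖)⁻¹ / 2 := by
            rw [h5]
            have := mul_le_mul h2 h3 h7 ha0
            nlinarith [mul_le_mul_of_nonneg_left this h6]
        _ = (‖a‖ * ‖q‖ ^ k) * (‖a‖ * (1 - ‖a‖)⁻¹ / 2) := by ring
    calc (‖a‖ * ‖q‖ ^ k) ^ 2 * (1 - ‖a‖ * ‖q‖ ^ k)⁻¹ / 2 + ‖a‖ * ‖q‖ ^ k
        ≤ (‖a‖ * ‖q‖ ^ k) * (‖a‖ * (1 - ‖a‖)⁻¹ / 2) + ‖a‖ * ‖q‖ ^ k * 1 := by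
          rw [mul_one]; exact add_le_add h4 le_rfl
      _ = C * (‖a‖ * ‖q‖ ^ k) := by rw [hC]; ring

lemma hasProd_qPochInf {a q : ℂ} (ha : ‖a‖ < 1) (hq : ‖q‖ < 1) :
    HasProd (fun k => 1 - a * q ^ k) (qPochInf a q) := by
  have := Complex.hasProd_of_hasSum_log (f := fun k => 1 - a * q ^ k)
    (fun k => QAux.factor_ne_zero ha hq.le k) (summable_log ha hq).hasSum
  exact this.multipliable.hasProd

lemma qPochInf_ne_zero {a q : ℂ} (ha : ‖a‖ < 1) (hq : ‖q‖ < 1) : qPochInf a q ≠ 0 := by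
  have h := Complex.cexp_tsum_eq_tprod (f := fun k => 1 - a * q ^ k)
    (fun k => QAux.factor_ne_zero ha hq.le k)
    (summable_log ha hq)
  rw [qPochInf, ← h]
  exact Complex.exp_ne_zero _

lemma tendsto_qPoch {a q : ℂ} (ha : ‖a‖ < 1) (hq : ‖q‖ < 1) :
    Filter.Tendsto (fun n => qPoch a q n) Filter.atTop (nhds (qPochInf a q)) :=
  (hasProd_qPochInf ha hq).tendsto_prod_nat

lemma qPochInf_split {a q : ℂ} (ha : ‖a‖ < 1) (hq : ‖q‖ < 1) (n : ℕ) :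
    qPochInf a q = qPoch a q n * qPochInf (a * q ^ n) q := by
  have han : ‖a * q ^ n‖ < 1 := QAux.norm_aqk_lt_one ha hq.le n
  have h1 := tendsto_qPoch ha hq
  have h2 := tendsto_qPoch han hq
  have h3 : Filter.Tendsto (fun m => qPoch a q (n + m)) Filter.atTop (nhds (qPochInf a q)) := by
    apply h1.comp
    exact Filter.tendsto_atTop_mono (fun m => Nat.le_add_left m n) Filter.tendsto_id
  have h4 : (fun m => qPoch a q (n + m)) = fun m => qPoch a q n * qPoch (a * q ^ n) q m :=
    funext fun m => QAux.qPoch_add a q n m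
  rw [h4] at h3
  exact tendsto_nhds_unique h3 (h2.const_mul _)

end InfProd

section QBinom

set_option maxHeartbeats 1000000

variable {q a z : ℂ}

/-- uniform bound for the ratio of Pochhammers -/
noncomputable def ratioBound (a q : ℂ) : ℝ :=
  Real.exp (‖a‖ * (1 - ‖q‖)⁻¹) * (Real.exp (-(‖q‖ * (1 - ‖q‖)⁻¹ / (1 - ‖q‖))))⁻¹

lemma ratioBound_nonneg (a q : ℂ) : 0 ≤ ratioBound a q :=
  mul_nonneg (Real.exp_pos _).le (inv_nonneg.mpr (Real.exp_pos _).le)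

lemma norm_ratio_le (hq : ‖q‖ < 1) (a : ℂ) (n : ℕ) :
    ‖qPoch a q n / qPoch q q n‖ ≤ ratioBound a q := by
  rw [norm_div]
  have h1 := QAux.norm_qPoch_le (a := a) hq n
  have h2 := QAux.le_norm_qPoch (a := q) hq hq n
  have h3 : (0:ℝ) < Real.exp (-(‖q‖ * (1 - ‖q‖)⁻¹ / (1 - ‖q‖))) := Real.exp_pos _
  have h4 : (0:ℝ) < ‖qPoch q q n‖ := lt_of_lt_of_le h3 h2
  rw [div_eq_mul_inv, ratioBound]
  exact mul_le_mul h1 (inv_anti₀ h3 h2) (inv_nonneg.mpr h4.le) (Real.exp_pos _).le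

lemma summable_ratio_pow (hq : ‖q‖ < 1) (a : ℂ) {z : ℂ} (hz : ‖z‖ < 1) :
    Summable fun n => qPoch a q n / qPoch q q n * z ^ n := by
  apply Summable.of_norm_bounded (g := fun n => ratioBound a q * ‖z‖ ^ n)
  · exact (summable_geometric_of_lt_one (norm_nonneg z) hz).mul_left _
  · intro n
    rw [norm_mul, norm_pow]
    exact mul_le_mul_of_nonneg_right (norm_ratio_le hq a n) (pow_nonneg (norm_nonneg z) n)

lemma ratio_rec (hq : ‖q‖ < 1) (a : ℂ) (n : ℕ) :
    qPoch a q (n + 1) / qPoch q q (n + 1) * (1 - q ^ (n + 1)) =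
      qPoch a q n / qPoch q q n * (1 - a * q ^ n) := by
  have h1 : (1 : ℂ) - q * q ^ n ≠ 0 := QAux.factor_ne_zero hq hq.le n
  have h2 : qPoch q q n ≠ 0 := QAux.qPoch_ne_zero hq hq.le n
  rw [QAux.qPoch_succ a q n, QAux.qPoch_succ q q n, pow_succ']
  rw [div_mul_eq_mul_div, mul_div_assoc]
  rw [mul_comm (qPoch q q n) (1 - q * q ^ n), ← div_div, div_self h1]
  ring

lemma norm_term_le (hq : ‖q‖ < 1) (a : ℂ) {z w : ℂ} (hw : ‖w‖ ≤ ‖z‖) (n : ℕ) :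
    ‖qPoch a q (n + 1) / qPoch q q (n + 1) * w ^ (n + 1)‖ ≤
      (ratioBound a q * ‖w‖) * ‖z‖ ^ n := by
  have hz0 : (0:ℝ) ≤ ‖z‖ := le_trans (norm_nonneg w) hw
  rw [norm_mul, norm_pow, pow_succ]
  calc ‖qPoch a q (n + 1) / qPoch q q (n + 1)‖ * (‖w‖ ^ n * ‖w‖)
      ≤ ratioBound a q * (‖z‖ ^ n * ‖w‖) := by
        apply mul_le_mul (norm_ratio_le hq a _)
        · exact mul_le_mul (pow_le_pow_left₀ (norm_nonneg w) hw n)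
            le_rfl (norm_nonneg w) (pow_nonneg hz0 n)
        · positivity
        · exact ratioBound_nonneg a q
    _ = ratioBound a q * ‖w‖ * ‖z‖ ^ n := by ring

lemma funeq (hq : ‖q‖ < 1) (a : ℂ) {z : ℂ} (hz : ‖z‖ < 1) :
    (1 - z) * (∑' n, qPoch a q n / qPoch q q n * z ^ n) =
      (1 - a * z) * (∑' n, qPoch a q n / qPoch q q n * (q * z) ^ n) := by
  have hqz : ‖q * z‖ < 1 := by
    rw [norm_mul]
    calc ‖q‖ * ‖z‖ ≤ 1 * ‖z‖ := by gcongr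
      _ = ‖z‖ := one_mul _
      _ < 1 := hz
  have S1 : Summable fun n => qPoch a q n / qPoch q q n * z ^ n := summable_ratio_pow hq a hz
  have S2 : Summable fun n => qPoch a q n / qPoch q q n * (q * z) ^ n :=
    summable_ratio_pow hq a hqz
  have S3 : Summable fun n => qPoch a q n / qPoch q q n * (1 - q ^ n) * z ^ n := by
    refine (S1.sub S2).congr fun n => ?_
    rw [mul_pow]; ring
  have key : (∑' n, qPoch a q n / qPoch q q n * (1 - q ^ n) * z ^ n) =
      ∑' n, qPoch a q n / qPoch q q n * (1 - a * q ^ n) * z ^ (n + 1) := by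
    rw [Summable.tsum_eq_zero_add S3]
    have h0 : qPoch a q 0 / qPoch q q 0 * (1 - q ^ 0) * z ^ 0 = 0 := by
      simp
    rw [h0, zero_add]
    refine tsum_congr fun n => ?_
    have hr := ratio_rec hq a n
    calc qPoch a q (n + 1) / qPoch q q (n + 1) * (1 - q ^ (n + 1)) * z ^ (n + 1)
        = (qPoch a q (n + 1) / qPoch q q (n + 1) * (1 - q ^ (n + 1))) * z ^ (n + 1) := by ring
      _ = (qPoch a q n / qPoch q q n * (1 - a * q ^ n)) * z ^ (n + 1) := by rw [hr]
  have E : (∑' n, qPoch a q n / qPoch q q n * z ^ n) -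
        (∑' n, qPoch a q n / qPoch q q n * (q * z) ^ n) =
      z * (∑' n, qPoch a q n / qPoch q q n * z ^ n) -
        (a * z) * (∑' n, qPoch a q n / qPoch q q n * (q * z) ^ n) := by
    calc (∑' n, qPoch a q n / qPoch q q n * z ^ n) -
          (∑' n, qPoch a q n / qPoch q q n * (q * z) ^ n)
        = ∑' n, (qPoch a q n / qPoch q q n * z ^ n -
            qPoch a q n / qPoch q q n * (q * z) ^ n) := (Summable.tsum_sub S1 S2).symm
      _ = ∑' n, qPoch a q n / qPoch q q n * (1 - q ^ n) * z ^ n := by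
          refine tsum_congr fun n => ?_; rw [mul_pow]; ring
      _ = ∑' n, qPoch a q n / qPoch q q n * (1 - a * q ^ n) * z ^ (n + 1) := key
      _ = ∑' n, (z * (qPoch a q n / qPoch q q n * z ^ n) -
            (a * z) * (qPoch a q n / qPoch q q n * (q * z) ^ n)) := by
          refine tsum_congr fun n => ?_; rw [mul_pow]; ring
      _ = (∑' n, z * (qPoch a q n / qPoch q q n * z ^ n)) -
            ∑' n, (a * z) * (qPoch a q n / qPoch q q n * (q * z) ^ n) :=
          Summable.tsum_sub (S1.mul_left z) (S2.mul_left (a * z))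
      _ = z * (∑' n, qPoch a q n / qPoch q q n * z ^ n) -
            (a * z) * (∑' n, qPoch a q n / qPoch q q n * (q * z) ^ n) := by
          rw [tsum_mul_left, tsum_mul_left]
  linear_combination E

lemma iterated (hq : ‖q‖ < 1) (a : ℂ) {z : ℂ} (hz : ‖z‖ < 1) (N : ℕ) :
    (∑' n, qPoch a q n / qPoch q q n * z ^ n) * qPoch z q N =
      qPoch (a * z) q N * (∑' n, qPoch a q n / qPoch q q n * (q ^ N * z) ^ n) := by
  induction N with
  | zero => simp [qPoch]
  | succ N ih =>
    have hzN : ‖q ^ N * z‖ < 1 := by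
      rw [norm_mul, norm_pow]
      calc ‖q‖ ^ N * ‖z‖ ≤ 1 * ‖z‖ := by
            gcongr
            exact pow_le_one₀ (norm_nonneg q) hq.le
        _ = ‖z‖ := one_mul _
        _ < 1 := hz
    have hfe := funeq hq a hzN
    have hrw1 : q * (q ^ N * z) = q ^ (N + 1) * z := by ring
    have hrw2 : a * (q ^ N * z) = (a * z) * q ^ N := by ring
    rw [hrw1, hrw2] at hfe
    rw [QAux.qPoch_succ z q N, QAux.qPoch_succ (a * z) q N]
    calc (∑' n, qPoch a q n / qPoch q q n * z ^ n) * (qPoch z q N * (1 - z * q ^ N))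
        = ((∑' n, qPoch a q n / qPoch q q n * z ^ n) * qPoch z q N) * (1 - z * q ^ N) := by ring
      _ = (qPoch (a * z) q N * (∑' n, qPoch a q n / qPoch q q n * (q ^ N * z) ^ n)) *
            (1 - z * q ^ N) := by rw [ih]
      _ = qPoch (a * z) q N * ((1 - q ^ N * z) *
            (∑' n, qPoch a q n / qPoch q q n * (q ^ N * z) ^ n)) := by ring
      _ = qPoch (a * z) q N * ((1 - (a * z) * q ^ N) *
            (∑' n, qPoch a q n / qPoch q q n * (q ^ (N + 1) * z) ^ n)) := by rw [hfe]
      _ = qPoch (a * z) q N * (1 - a * z * q ^ N) *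
            (∑' n, qPoch a q n / qPoch q q n * (q ^ (N + 1) * z) ^ n) := by ring

lemma tendsto_inner (hq : ‖q‖ < 1) (a : ℂ) {z : ℂ} (hz : ‖z‖ < 1) :
    Filter.Tendsto (fun N => ∑' n, qPoch a q n / qPoch q q n * (q ^ N * z) ^ n)
      Filter.atTop (nhds 1) := by
  have hz0 : (0:ℝ) ≤ ‖z‖ := norm_nonneg z
  have hbd : ∀ w : ℂ, ‖w‖ ≤ ‖z‖ →
      ‖(∑' n, qPoch a q n / qPoch q q n * w ^ n) - 1‖ ≤
        (ratioBound a q * (1 - ‖z‖)⁻¹) * ‖w‖ := by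
    intro w hw
    have hw1 : ‖w‖ < 1 := lt_of_le_of_lt hw hz
    have S : Summable fun n => qPoch a q n / qPoch q q n * w ^ n := summable_ratio_pow hq a hw1
    have hc0 : qPoch a q 0 / qPoch q q 0 * w ^ 0 = 1 := by simp [qPoch]
    have h1 : (∑' n, qPoch a q n / qPoch q q n * w ^ n) - 1 =
        ∑' n, qPoch a q (n + 1) / qPoch q q (n + 1) * w ^ (n + 1) := by
      rw [Summable.tsum_eq_zero_add S, hc0]; ring
    have Sg : Summable fun n : ℕ => (ratioBound a q * ‖w‖) * ‖z‖ ^ n :=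
      (summable_geometric_of_lt_one hz0 hz).mul_left _
    have Snorm : Summable fun n => ‖qPoch a q (n + 1) / qPoch q q (n + 1) * w ^ (n + 1)‖ :=
      Summable.of_nonneg_of_le (fun n => norm_nonneg _) (fun n => norm_term_le hq a hw n) Sg
    rw [h1]
    calc ‖∑' n, qPoch a q (n + 1) / qPoch q q (n + 1) * w ^ (n + 1)‖
        ≤ ∑' n, ‖qPoch a q (n + 1) / qPoch q q (n + 1) * w ^ (n + 1)‖ :=
          norm_tsum_le_tsum_norm Snorm
      _ ≤ ∑' n : ℕ, (ratioBound a q * ‖w‖) * ‖z‖ ^ n :=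
          Summable.tsum_le_tsum (fun n => norm_term_le hq a hw n) Snorm Sg
      _ = (ratioBound a q * ‖w‖) * (1 - ‖z‖)⁻¹ := by
          rw [tsum_mul_left, tsum_geometric_of_lt_one hz0 hz]
      _ = (ratioBound a q * (1 - ‖z‖)⁻¹) * ‖w‖ := by ring
  rw [tendsto_iff_norm_sub_tendsto_zero]
  apply squeeze_zero (fun N => norm_nonneg _)
    (g := fun N => (ratioBound a q * (1 - ‖z‖)⁻¹) * (‖q‖ ^ N * ‖z‖))
  · intro N
    have hwle : ‖q ^ N * z‖ ≤ ‖z‖ := by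
      rw [norm_mul, norm_pow]
      calc ‖q‖ ^ N * ‖z‖ ≤ 1 * ‖z‖ := by
            gcongr
            exact pow_le_one₀ (norm_nonneg q) hq.le
        _ = ‖z‖ := one_mul _
    have := hbd (q ^ N * z) hwle
    rwa [norm_mul, norm_pow] at this
  · have h1 : Filter.Tendsto (fun N : ℕ => ‖q‖ ^ N) Filter.atTop (nhds 0) :=
      tendsto_pow_atTop_nhds_zero_of_lt_one (norm_nonneg q) hq
    have h2 := (h1.mul_const ‖z‖).const_mul (ratioBound a q * (1 - ‖z‖)⁻¹)
    simpa using h2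

theorem qbinom (hq : ‖q‖ < 1) {a z : ℂ} (ha : ‖a‖ < 1) (hz : ‖z‖ < 1) :
    ∑' n, qPoch a q n / qPoch q q n * z ^ n = qPochInf (a * z) q / qPochInf z q := by
  have haz : ‖a * z‖ < 1 := by
    rw [norm_mul]
    calc ‖a‖ * ‖z‖ ≤ 1 * ‖z‖ := by gcongr
      _ = ‖z‖ := one_mul _
      _ < 1 := hz
  have limit1 : Filter.Tendsto (fun N => (∑' n, qPoch a q n / qPoch q q n * z ^ n) * qPoch z q N)
      Filter.atTop (nhds ((∑' n, qPoch a q n / qPoch q q n * z ^ n) * qPochInf z q)) :=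
    (tendsto_qPoch hz hq).const_mul _
  have limit2 : Filter.Tendsto (fun N => qPoch (a * z) q N *
        (∑' n, qPoch a q n / qPoch q q n * (q ^ N * z) ^ n))
      Filter.atTop (nhds (qPochInf (a * z) q * 1)) :=
    (tendsto_qPoch haz hq).mul (tendsto_inner hq a hz)
  have heq : (fun N => (∑' n, qPoch a q n / qPoch q q n * z ^ n) * qPoch z q N) =
      fun N => qPoch (a * z) q N * (∑' n, qPoch a q n / qPoch q q n * (q ^ N * z) ^ n) :=
    funext fun N => iterated hq a hz N
  rw [heq] at limit1
  have hfinal := tendsto_nhds_unique limit1 limit2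
  rw [mul_one] at hfinal
  rw [eq_div_iff (qPochInf_ne_zero hz hq)]
  exact hfinal

theorem euler (hq : ‖q‖ < 1) {z : ℂ} (hz : ‖z‖ < 1) :
    ∑' n : ℕ, z ^ n / qPoch q q n = 1 / qPochInf z q := by
  have h := qbinom hq (a := 0) (by simp) hz
  simp only [QAux.qPoch_zero_left, zero_mul] at h
  have h2 : qPochInf 0 q = 1 := by
    rw [qPochInf]; simp
  rw [h2] at h
  rw [← h]
  refine tsum_congr fun n => ?_
  rw [one_div]
  ring

end QBinom

section Assembly

set_option maxHeartbeats 1600000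

noncomputable def F4 (q x y : ℂ) (n : ℕ × ℕ × ℕ × ℕ) : ℂ :=
  x ^ (n.1 + n.2.1 + 2 * n.2.2.2) * y ^ (n.2.1 + n.2.2.1) *
    q ^ (2 * Nat.choose n.1 2 + 2 * n.1 * n.2.1 + 4 * n.1 * n.2.2.1 +
      4 * n.2.2.1 * n.2.2.2 + n.1 + 3 * n.2.1 + 2 * n.2.2.1 + 2 * n.2.2.2) /
    (qPoch (q ^ 2) (q ^ 2) n.1 * qPoch (q ^ 2) (q ^ 2) n.2.1 *
      qPoch (q ^ 4) (q ^ 4) n.2.2.1 * qPoch (q ^ 4) (q ^ 4) n.2.2.2)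

lemma qPochInf_shift {A Q : ℂ} (hA : ‖A‖ < 1) (hQ : ‖Q‖ < 1) (n : ℕ) :
    qPochInf (A * Q ^ n) Q = qPochInf A Q / qPoch A Q n := by
  have h := qPochInf_split hA hQ n
  have h2 : qPoch A Q n ≠ 0 := QAux.qPoch_ne_zero hA hQ.le n
  rw [eq_div_iff h2]
  linear_combination -h

lemma one_div_qPochInf_shift {A Q : ℂ} (hA : ‖A‖ < 1) (hQ : ‖Q‖ < 1) (n : ℕ) :
    1 / qPochInf (A * Q ^ n) Q = qPoch A Q n / qPochInf A Q := by
  have h1 : qPochInf A Q ≠ 0 := qPochInf_ne_zero hA hQ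
  have h2 : qPoch A Q n ≠ 0 := QAux.qPoch_ne_zero hA hQ.le n
  rw [qPochInf_shift hA hQ n, one_div, inv_div]

section Norms

variable {q x y : ℂ}

lemma hq2' (hq : ‖q‖ < 1) : ‖q ^ 2‖ < 1 := by
  rw [norm_pow]; exact pow_lt_one₀ (norm_nonneg q) hq two_ne_zero

lemma hq4' (hq : ‖q‖ < 1) : ‖q ^ 4‖ < 1 := by
  rw [norm_pow]; exact pow_lt_one₀ (norm_nonneg q) hq (by norm_num)

lemma norm_mul_lt_one {u v : ℂ} (hu : ‖u‖ ≤ 1) (hv : ‖v‖ < 1) : ‖u * v‖ < 1 := by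
  rw [norm_mul]
  calc ‖u‖ * ‖v‖ ≤ 1 * ‖v‖ := by gcongr
    _ = ‖v‖ := one_mul _
    _ < 1 := hv

lemma hyq2' (hq : ‖q‖ < 1) (hy : ‖y‖ ≤ 1) : ‖y * q ^ 2‖ < 1 :=
  norm_mul_lt_one hy (hq2' hq)

lemma hxyq3' (hq : ‖q‖ < 1) (hx : ‖x‖ ≤ 1) (hy : ‖y‖ ≤ 1) : ‖x * y * q ^ 3‖ < 1 := by
  have h1 : ‖x * y‖ ≤ 1 := by
    rw [norm_mul]; exact mul_le_one₀ hx (norm_nonneg y) hy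
  have h3 : ‖q ^ 3‖ < 1 := by
    rw [norm_pow]; exact pow_lt_one₀ (norm_nonneg q) hq (by norm_num)
  exact norm_mul_lt_one h1 h3

lemma hx2q2' (hq : ‖q‖ < 1) (hx : ‖x‖ ≤ 1) : ‖x ^ 2 * q ^ 2‖ < 1 := by
  have h1 : ‖x ^ 2‖ ≤ 1 := by
    rw [norm_pow]; exact pow_le_one₀ (norm_nonneg x) hx
  exact norm_mul_lt_one h1 (hq2' hq)

lemma hx2yq4' (hq : ‖q‖ < 1) (hx : ‖x‖ ≤ 1) (hy : ‖y‖ ≤ 1) : ‖x ^ 2 * y * q ^ 4‖ < 1 := by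
  have h1 : ‖x ^ 2 * y‖ ≤ 1 := by
    rw [norm_mul, norm_pow]
    exact mul_le_one₀ (pow_le_one₀ (norm_nonneg x) hx) (norm_nonneg y) hy
  exact norm_mul_lt_one h1 (hq4' hq)

end Norms

lemma F4_summable {q x y : ℂ} (hq : ‖q‖ < 1) (hx : ‖x‖ ≤ 1) (hy : ‖y‖ ≤ 1) :
    Summable (F4 q x y) := by
  have hq0 : (0:ℝ) ≤ ‖q‖ := norm_nonneg q
  have hq2 := hq2' (q := q) hq
  have hq4 := hq4' (q := q) hq
  set L2 : ℝ := Real.exp (-(‖q ^ 2‖ * (1 - ‖q ^ 2‖)⁻¹ / (1 - ‖q ^ 2‖))) with hL2def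
  set L4 : ℝ := Real.exp (-(‖q ^ 4‖ * (1 - ‖q ^ 4‖)⁻¹ / (1 - ‖q ^ 4‖))) with hL4def
  have hL2 : 0 < L2 := Real.exp_pos _
  have hL4 : 0 < L4 := Real.exp_pos _
  have hr1 : Summable (fun m : ℕ => ‖q‖ ^ m) := summable_geometric_of_lt_one hq0 hq
  have hr3 : Summable (fun m : ℕ => (‖q‖ ^ 3) ^ m) :=
    summable_geometric_of_lt_one (pow_nonneg hq0 3) (pow_lt_one₀ hq0 hq (by norm_num))
  have hr2 : Summable (fun m : ℕ => (‖q‖ ^ 2) ^ m) :=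
    summable_geometric_of_lt_one (pow_nonneg hq0 2) (pow_lt_one₀ hq0 hq (by norm_num))
  have s34 : Summable (fun p : ℕ × ℕ => (‖q‖ ^ 2) ^ p.1 * (‖q‖ ^ 2) ^ p.2) :=
    hr2.mul_of_nonneg hr2 (fun m => pow_nonneg (pow_nonneg hq0 2) m)
      (fun m => pow_nonneg (pow_nonneg hq0 2) m)
  have s234 : Summable (fun p : ℕ × ℕ × ℕ =>
      (‖q‖ ^ 3) ^ p.1 * ((‖q‖ ^ 2) ^ p.2.1 * (‖q‖ ^ 2) ^ p.2.2)) :=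
    hr3.mul_of_nonneg s34 (fun m => pow_nonneg (pow_nonneg hq0 3) m)
      (fun p => mul_nonneg (pow_nonneg (pow_nonneg hq0 2) _) (pow_nonneg (pow_nonneg hq0 2) _))
  have s1234 : Summable (fun p : ℕ × ℕ × ℕ × ℕ =>
      ‖q‖ ^ p.1 * ((‖q‖ ^ 3) ^ p.2.1 * ((‖q‖ ^ 2) ^ p.2.2.1 * (‖q‖ ^ 2) ^ p.2.2.2))) :=
    hr1.mul_of_nonneg s234 (fun m => pow_nonneg hq0 m)
      (fun p => mul_nonneg (pow_nonneg (pow_nonneg hq0 3) _)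
        (mul_nonneg (pow_nonneg (pow_nonneg hq0 2) _) (pow_nonneg (pow_nonneg hq0 2) _)))
  apply Summable.of_norm_bounded (s1234.mul_left ((L2 * L2 * L4 * L4)⁻¹))
  rintro ⟨n1, n2, n3, n4⟩
  simp only [F4]
  have hnum : ‖x ^ (n1 + n2 + 2 * n4) * y ^ (n2 + n3) *
      q ^ (2 * Nat.choose n1 2 + 2 * n1 * n2 + 4 * n1 * n3 +
        4 * n3 * n4 + n1 + 3 * n2 + 2 * n3 + 2 * n4)‖ ≤
      ‖q‖ ^ (n1 + 3 * n2 + 2 * n3 + 2 * n4) := by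
    rw [norm_mul, norm_mul, norm_pow, norm_pow, norm_pow]
    have hE : n1 + 3 * n2 + 2 * n3 + 2 * n4 ≤
        2 * Nat.choose n1 2 + 2 * n1 * n2 + 4 * n1 * n3 + 4 * n3 * n4 + n1 + 3 * n2 +
          2 * n3 + 2 * n4 := by
      have h0 : 2 * Nat.choose n1 2 + 2 * n1 * n2 + 4 * n1 * n3 + 4 * n3 * n4 + n1 + 3 * n2 +
          2 * n3 + 2 * n4 =
          (2 * Nat.choose n1 2 + 2 * n1 * n2 + 4 * n1 * n3 + 4 * n3 * n4) +
            (n1 + 3 * n2 + 2 * n3 + 2 * n4) := by ring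
      rw [h0]
      exact Nat.le_add_left _ _
    calc ‖x‖ ^ (n1 + n2 + 2 * n4) * ‖y‖ ^ (n2 + n3) * ‖q‖ ^ (2 * Nat.choose n1 2 +
          2 * n1 * n2 + 4 * n1 * n3 + 4 * n3 * n4 + n1 + 3 * n2 + 2 * n3 + 2 * n4)
        ≤ 1 * 1 * ‖q‖ ^ (2 * Nat.choose n1 2 + 2 * n1 * n2 + 4 * n1 * n3 + 4 * n3 * n4 +
            n1 + 3 * n2 + 2 * n3 + 2 * n4) := by
          gcongr
          · exact pow_le_one₀ (norm_nonneg x) hx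
          · exact pow_le_one₀ (norm_nonneg y) hy
      _ = ‖q‖ ^ (2 * Nat.choose n1 2 + 2 * n1 * n2 + 4 * n1 * n3 + 4 * n3 * n4 +
            n1 + 3 * n2 + 2 * n3 + 2 * n4) := by ring
      _ ≤ ‖q‖ ^ (n1 + 3 * n2 + 2 * n3 + 2 * n4) := pow_le_pow_of_le_one hq0 hq.le hE
  have hden : L2 * L2 * L4 * L4 ≤ ‖qPoch (q ^ 2) (q ^ 2) n1 * qPoch (q ^ 2) (q ^ 2) n2 *
      qPoch (q ^ 4) (q ^ 4) n3 * qPoch (q ^ 4) (q ^ 4) n4‖ := by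
    rw [norm_mul, norm_mul, norm_mul]
    gcongr
    · exact QAux.le_norm_qPoch hq2 hq2 n1
    · exact QAux.le_norm_qPoch hq2 hq2 n2
    · exact QAux.le_norm_qPoch hq4 hq4 n3
    · exact QAux.le_norm_qPoch hq4 hq4 n4
  rw [norm_div]
  calc ‖x ^ (n1 + n2 + 2 * n4) * y ^ (n2 + n3) * q ^ (2 * Nat.choose n1 2 + 2 * n1 * n2 +
        4 * n1 * n3 + 4 * n3 * n4 + n1 + 3 * n2 + 2 * n3 + 2 * n4)‖ /
        ‖qPoch (q ^ 2) (q ^ 2) n1 * qPoch (q ^ 2) (q ^ 2) n2 *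
          qPoch (q ^ 4) (q ^ 4) n3 * qPoch (q ^ 4) (q ^ 4) n4‖
      ≤ ‖q‖ ^ (n1 + 3 * n2 + 2 * n3 + 2 * n4) / (L2 * L2 * L4 * L4) :=
        div_le_div₀ (pow_nonneg hq0 _) hnum (by positivity) hden
    _ = (L2 * L2 * L4 * L4)⁻¹ *
        (‖q‖ ^ n1 * ((‖q‖ ^ 3) ^ n2 * ((‖q‖ ^ 2) ^ n3 * (‖q‖ ^ 2) ^ n4))) := by
        rw [pow_add, pow_add, pow_add, pow_mul, pow_mul, pow_mul]
        ring

end Assembly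

section Steps

set_option maxHeartbeats 1600000

variable {q x y : ℂ}

lemma step3 (hq : ‖q‖ < 1) (hx : ‖x‖ ≤ 1) (hy : ‖y‖ ≤ 1) (n1 n2 n4 : ℕ) :
    ∑' n3 : ℕ, F4 q x y (n1, n2, n3, n4) =
      x ^ (n1 + n2 + 2 * n4) * y ^ n2 *
          q ^ (2 * Nat.choose n1 2 + 2 * n1 * n2 + n1 + 3 * n2 + 2 * n4) /
          (qPoch (q ^ 2) (q ^ 2) n1 * qPoch (q ^ 2) (q ^ 2) n2 * qPoch (q ^ 4) (q ^ 4) n4) *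
        (qPoch (y * q ^ 2) (q ^ 4) (n1 + n4) / qPochInf (y * q ^ 2) (q ^ 4)) := by
  have hq4 := hq4' (q := q) hq
  have hyq2 := hyq2' (q := q) (y := y) hq hy
  have hw : y * q ^ (2 + 4 * n1 + 4 * n4) = (y * q ^ 2) * (q ^ 4) ^ (n1 + n4) := by
    ring
  have hwn : ‖y * q ^ (2 + 4 * n1 + 4 * n4)‖ < 1 := by
    rw [hw]; exact QAux.norm_aqk_lt_one hyq2 hq4.le (n1 + n4)
  calc ∑' n3 : ℕ, F4 q x y (n1, n2, n3, n4)
      = ∑' n3 : ℕ, (x ^ (n1 + n2 + 2 * n4) * y ^ n2 *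
            q ^ (2 * Nat.choose n1 2 + 2 * n1 * n2 + n1 + 3 * n2 + 2 * n4) /
            (qPoch (q ^ 2) (q ^ 2) n1 * qPoch (q ^ 2) (q ^ 2) n2 * qPoch (q ^ 4) (q ^ 4) n4) *
          ((y * q ^ (2 + 4 * n1 + 4 * n4)) ^ n3 / qPoch (q ^ 4) (q ^ 4) n3)) := by
        refine tsum_congr fun n3 => ?_
        simp only [F4]
        rw [show 2 * Nat.choose n1 2 + 2 * n1 * n2 + 4 * n1 * n3 + 4 * n3 * n4 + n1 + 3 * n2 +
            2 * n3 + 2 * n4 =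
            (2 * Nat.choose n1 2 + 2 * n1 * n2 + n1 + 3 * n2 + 2 * n4) +
              (2 + 4 * n1 + 4 * n4) * n3 from by ring,
          pow_add q, pow_mul q, pow_add y, mul_pow]
        ring
    _ = x ^ (n1 + n2 + 2 * n4) * y ^ n2 *
            q ^ (2 * Nat.choose n1 2 + 2 * n1 * n2 + n1 + 3 * n2 + 2 * n4) /
            (qPoch (q ^ 2) (q ^ 2) n1 * qPoch (q ^ 2) (q ^ 2) n2 * qPoch (q ^ 4) (q ^ 4) n4) *
          ∑' n3 : ℕ, ((y * q ^ (2 + 4 * n1 + 4 * n4)) ^ n3 / qPoch (q ^ 4) (q ^ 4) n3) :=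
        tsum_mul_left
    _ = x ^ (n1 + n2 + 2 * n4) * y ^ n2 *
            q ^ (2 * Nat.choose n1 2 + 2 * n1 * n2 + n1 + 3 * n2 + 2 * n4) /
            (qPoch (q ^ 2) (q ^ 2) n1 * qPoch (q ^ 2) (q ^ 2) n2 * qPoch (q ^ 4) (q ^ 4) n4) *
          (1 / qPochInf (y * q ^ (2 + 4 * n1 + 4 * n4)) (q ^ 4)) := by
        rw [euler hq4 hwn]
    _ = x ^ (n1 + n2 + 2 * n4) * y ^ n2 *
            q ^ (2 * Nat.choose n1 2 + 2 * n1 * n2 + n1 + 3 * n2 + 2 * n4) /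
            (qPoch (q ^ 2) (q ^ 2) n1 * qPoch (q ^ 2) (q ^ 2) n2 * qPoch (q ^ 4) (q ^ 4) n4) *
          (qPoch (y * q ^ 2) (q ^ 4) (n1 + n4) / qPochInf (y * q ^ 2) (q ^ 4)) := by
        rw [hw, one_div_qPochInf_shift hyq2 hq4 (n1 + n4)]

lemma step4 (hq : ‖q‖ < 1) (hx : ‖x‖ ≤ 1) (hy : ‖y‖ ≤ 1) (n1 n2 : ℕ) :
    ∑' n4 : ℕ, (x ^ (n1 + n2 + 2 * n4) * y ^ n2 *
          q ^ (2 * Nat.choose n1 2 + 2 * n1 * n2 + n1 + 3 * n2 + 2 * n4) /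
          (qPoch (q ^ 2) (q ^ 2) n1 * qPoch (q ^ 2) (q ^ 2) n2 * qPoch (q ^ 4) (q ^ 4) n4) *
        (qPoch (y * q ^ 2) (q ^ 4) (n1 + n4) / qPochInf (y * q ^ 2) (q ^ 4))) =
      x ^ (n1 + n2) * y ^ n2 * q ^ (2 * Nat.choose n1 2 + 2 * n1 * n2 + n1 + 3 * n2) /
          (qPoch (q ^ 2) (q ^ 2) n1 * qPoch (q ^ 2) (q ^ 2) n2) *
        (qPoch (y * q ^ 2) (q ^ 4) n1 / qPochInf (y * q ^ 2) (q ^ 4)) *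
        (qPochInf (x ^ 2 * y * q ^ 4) (q ^ 4) /
          qPoch (x ^ 2 * y * q ^ 4) (q ^ 4) n1 / qPochInf (x ^ 2 * q ^ 2) (q ^ 4)) := by
  have hq4 := hq4' (q := q) hq
  have hyq2 := hyq2' (q := q) (y := y) hq hy
  have hx2q2 := hx2q2' (q := q) (x := x) hq hx
  have hx2yq4 := hx2yq4' (q := q) (x := x) (y := y) hq hx hy
  have ha' : ‖(y * q ^ 2) * (q ^ 4) ^ n1‖ < 1 := QAux.norm_aqk_lt_one hyq2 hq4.le n1
  calc ∑' n4 : ℕ, (x ^ (n1 + n2 + 2 * n4) * y ^ n2 *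
          q ^ (2 * Nat.choose n1 2 + 2 * n1 * n2 + n1 + 3 * n2 + 2 * n4) /
          (qPoch (q ^ 2) (q ^ 2) n1 * qPoch (q ^ 2) (q ^ 2) n2 * qPoch (q ^ 4) (q ^ 4) n4) *
        (qPoch (y * q ^ 2) (q ^ 4) (n1 + n4) / qPochInf (y * q ^ 2) (q ^ 4)))
      = ∑' n4 : ℕ, (x ^ (n1 + n2) * y ^ n2 *
            q ^ (2 * Nat.choose n1 2 + 2 * n1 * n2 + n1 + 3 * n2) /
            (qPoch (q ^ 2) (q ^ 2) n1 * qPoch (q ^ 2) (q ^ 2) n2) *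
          (qPoch (y * q ^ 2) (q ^ 4) n1 / qPochInf (y * q ^ 2) (q ^ 4)) *
          (qPoch ((y * q ^ 2) * (q ^ 4) ^ n1) (q ^ 4) n4 / qPoch (q ^ 4) (q ^ 4) n4 *
            (x ^ 2 * q ^ 2) ^ n4)) := by
        refine tsum_congr fun n4 => ?_
        rw [QAux.qPoch_add (y * q ^ 2) (q ^ 4) n1 n4]
        rw [show n1 + n2 + 2 * n4 = (n1 + n2) + 2 * n4 from by ring,
          show 2 * Nat.choose n1 2 + 2 * n1 * n2 + n1 + 3 * n2 + 2 * n4 =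
            (2 * Nat.choose n1 2 + 2 * n1 * n2 + n1 + 3 * n2) + 2 * n4 from by ring,
          pow_add x, pow_add q, pow_mul x, pow_mul q, mul_pow]
        ring
    _ = x ^ (n1 + n2) * y ^ n2 * q ^ (2 * Nat.choose n1 2 + 2 * n1 * n2 + n1 + 3 * n2) /
            (qPoch (q ^ 2) (q ^ 2) n1 * qPoch (q ^ 2) (q ^ 2) n2) *
          (qPoch (y * q ^ 2) (q ^ 4) n1 / qPochInf (y * q ^ 2) (q ^ 4)) *
          ∑' n4 : ℕ, (qPoch ((y * q ^ 2) * (q ^ 4) ^ n1) (q ^ 4) n4 / qPoch (q ^ 4) (q ^ 4) n4 *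
            (x ^ 2 * q ^ 2) ^ n4) := by
        rw [← tsum_mul_left]
    _ = x ^ (n1 + n2) * y ^ n2 * q ^ (2 * Nat.choose n1 2 + 2 * n1 * n2 + n1 + 3 * n2) /
            (qPoch (q ^ 2) (q ^ 2) n1 * qPoch (q ^ 2) (q ^ 2) n2) *
          (qPoch (y * q ^ 2) (q ^ 4) n1 / qPochInf (y * q ^ 2) (q ^ 4)) *
          (qPochInf ((y * q ^ 2) * (q ^ 4) ^ n1 * (x ^ 2 * q ^ 2)) (q ^ 4) /
            qPochInf (x ^ 2 * q ^ 2) (q ^ 4)) := by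
        rw [qbinom hq4 ha' hx2q2]
    _ = x ^ (n1 + n2) * y ^ n2 * q ^ (2 * Nat.choose n1 2 + 2 * n1 * n2 + n1 + 3 * n2) /
            (qPoch (q ^ 2) (q ^ 2) n1 * qPoch (q ^ 2) (q ^ 2) n2) *
          (qPoch (y * q ^ 2) (q ^ 4) n1 / qPochInf (y * q ^ 2) (q ^ 4)) *
          (qPochInf (x ^ 2 * y * q ^ 4) (q ^ 4) /
            qPoch (x ^ 2 * y * q ^ 4) (q ^ 4) n1 / qPochInf (x ^ 2 * q ^ 2) (q ^ 4)) := by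
        rw [show (y * q ^ 2) * (q ^ 4) ^ n1 * (x ^ 2 * q ^ 2) =
            (x ^ 2 * y * q ^ 4) * (q ^ 4) ^ n1 from by ring,
          qPochInf_shift hx2yq4 hq4 n1]

lemma step5 (hq : ‖q‖ < 1) (hx : ‖x‖ ≤ 1) (hy : ‖y‖ ≤ 1) (n1 : ℕ) (d e : ℂ) :
    ∑' n2 : ℕ, (x ^ (n1 + n2) * y ^ n2 *
          q ^ (2 * Nat.choose n1 2 + 2 * n1 * n2 + n1 + 3 * n2) /
          (qPoch (q ^ 2) (q ^ 2) n1 * qPoch (q ^ 2) (q ^ 2) n2) * d * e) =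
      x ^ n1 * q ^ (2 * Nat.choose n1 2 + n1) / qPoch (q ^ 2) (q ^ 2) n1 *
        (qPoch (x * y * q ^ 3) (q ^ 2) n1 / qPochInf (x * y * q ^ 3) (q ^ 2)) * d * e := by
  have hq2 := hq2' (q := q) hq
  have hxyq3 := hxyq3' (q := q) (x := x) (y := y) hq hx hy
  have hw : x * y * q ^ (3 + 2 * n1) = (x * y * q ^ 3) * (q ^ 2) ^ n1 := by
    ring
  have hwn : ‖x * y * q ^ (3 + 2 * n1)‖ < 1 := by
    rw [hw]; exact QAux.norm_aqk_lt_one hxyq3 hq2.le n1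
  calc ∑' n2 : ℕ, (x ^ (n1 + n2) * y ^ n2 *
          q ^ (2 * Nat.choose n1 2 + 2 * n1 * n2 + n1 + 3 * n2) /
          (qPoch (q ^ 2) (q ^ 2) n1 * qPoch (q ^ 2) (q ^ 2) n2) * d * e)
      = ∑' n2 : ℕ, (x ^ n1 * q ^ (2 * Nat.choose n1 2 + n1) / qPoch (q ^ 2) (q ^ 2) n1 * d * e *
          ((x * y * q ^ (3 + 2 * n1)) ^ n2 / qPoch (q ^ 2) (q ^ 2) n2)) := by
        refine tsum_congr fun n2 => ?_
        rw [show n1 + n2 = n1 + n2 from rfl,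
          show 2 * Nat.choose n1 2 + 2 * n1 * n2 + n1 + 3 * n2 =
            (2 * Nat.choose n1 2 + n1) + (3 + 2 * n1) * n2 from by ring,
          pow_add x, pow_add q, pow_mul q, mul_pow, mul_pow]
        ring
    _ = x ^ n1 * q ^ (2 * Nat.choose n1 2 + n1) / qPoch (q ^ 2) (q ^ 2) n1 * d * e *
          ∑' n2 : ℕ, ((x * y * q ^ (3 + 2 * n1)) ^ n2 / qPoch (q ^ 2) (q ^ 2) n2) := by
        rw [← tsum_mul_left]
    _ = x ^ n1 * q ^ (2 * Nat.choose n1 2 + n1) / qPoch (q ^ 2) (q ^ 2) n1 * d * e *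
          (1 / qPochInf (x * y * q ^ (3 + 2 * n1)) (q ^ 2)) := by
        rw [euler hq2 hwn]
    _ = x ^ n1 * q ^ (2 * Nat.choose n1 2 + n1) / qPoch (q ^ 2) (q ^ 2) n1 *
          (qPoch (x * y * q ^ 3) (q ^ 2) n1 / qPochInf (x * y * q ^ 3) (q ^ 2)) * d * e := by
        rw [hw, one_div_qPochInf_shift hxyq3 hq2 n1]
        ring

end Steps

set_option maxHeartbeats 1600000 in
/-- The reduction of the plain quadruple sum to a single sum of Rogers–Ramanujan type. -/
theorem plain_quadruple_sum_to_single_sum (q x y : ℂ) (hq : ‖q‖ < 1)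
    (hx : ‖x‖ ≤ 1) (hy : ‖y‖ ≤ 1) :
    ∑' n : ℕ × ℕ × ℕ × ℕ,
        x ^ (n.1 + n.2.1 + 2 * n.2.2.2) * y ^ (n.2.1 + n.2.2.1) *
          q ^ (2 * Nat.choose n.1 2 + 2 * n.1 * n.2.1 + 4 * n.1 * n.2.2.1 +
            4 * n.2.2.1 * n.2.2.2 + n.1 + 3 * n.2.1 + 2 * n.2.2.1 + 2 * n.2.2.2) /
          (qPoch (q ^ 2) (q ^ 2) n.1 * qPoch (q ^ 2) (q ^ 2) n.2.1 *
            qPoch (q ^ 4) (q ^ 4) n.2.2.1 * qPoch (q ^ 4) (q ^ 4) n.2.2.2) =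
      qPochInf (x ^ 2 * y * q ^ 4) (q ^ 4) /
        (qPochInf (x ^ 2 * q ^ 2) (q ^ 4) * qPochInf (x * y * q ^ 3) (q ^ 2) *
          qPochInf (y * q ^ 2) (q ^ 4)) *
      ∑' n : ℕ,
        x ^ n * q ^ (2 * Nat.choose n 2 + n) *
          qPoch (x * y * q ^ 3) (q ^ 2) n * qPoch (y * q ^ 2) (q ^ 4) n /
          (qPoch (q ^ 2) (q ^ 2) n * qPoch (x ^ 2 * y * q ^ 4) (q ^ 4) n) := by
  have hsum : Summable (F4 q x y) := F4_summable hq hx hy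
  have h2 : ∀ n1 : ℕ, Summable (fun p : ℕ × ℕ × ℕ => F4 q x y (n1, p)) :=
    fun n1 => hsum.prod_factor n1
  have h34 : ∀ n1 n2 : ℕ, Summable (fun p : ℕ × ℕ => F4 q x y (n1, n2, p)) :=
    fun n1 n2 => (h2 n1).prod_factor n2
  calc ∑' n : ℕ × ℕ × ℕ × ℕ, F4 q x y n
      = ∑' n1 : ℕ, ∑' p : ℕ × ℕ × ℕ, F4 q x y (n1, p) :=
        Summable.tsum_prod' hsum h2
    _ = ∑' n1 : ℕ, ∑' n2 : ℕ, ∑' p : ℕ × ℕ, F4 q x y (n1, n2, p) :=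
        tsum_congr fun n1 => Summable.tsum_prod' (h2 n1) (fun n2 => h34 n1 n2)
    _ = ∑' n1 : ℕ, ∑' n2 : ℕ, ∑' n4 : ℕ, ∑' n3 : ℕ, F4 q x y (n1, n2, n3, n4) := by
        refine tsum_congr fun n1 => tsum_congr fun n2 => ?_
        calc ∑' p : ℕ × ℕ, F4 q x y (n1, n2, p)
            = ∑' n3 : ℕ, ∑' n4 : ℕ, F4 q x y (n1, n2, n3, n4) :=
              Summable.tsum_prod' (h34 n1 n2) (fun n3 => (h34 n1 n2).prod_factor n3)
          _ = ∑' n4 : ℕ, ∑' n3 : ℕ, F4 q x y (n1, n2, n3, n4) :=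
              (Summable.tsum_comm' (f := fun n3 n4 => F4 q x y (n1, n2, n3, n4)) (h34 n1 n2)
                (fun n3 => (h34 n1 n2).prod_factor n3)
                (fun n4 => (h34 n1 n2).prod_symm.prod_factor n4)).symm
    _ = ∑' n1 : ℕ, ∑' n2 : ℕ, ∑' n4 : ℕ,
          (x ^ (n1 + n2 + 2 * n4) * y ^ n2 *
              q ^ (2 * Nat.choose n1 2 + 2 * n1 * n2 + n1 + 3 * n2 + 2 * n4) /
              (qPoch (q ^ 2) (q ^ 2) n1 * qPoch (q ^ 2) (q ^ 2) n2 *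
                qPoch (q ^ 4) (q ^ 4) n4) *
            (qPoch (y * q ^ 2) (q ^ 4) (n1 + n4) / qPochInf (y * q ^ 2) (q ^ 4))) :=
        tsum_congr fun n1 => tsum_congr fun n2 => tsum_congr fun n4 => step3 hq hx hy n1 n2 n4
    _ = ∑' n1 : ℕ, ∑' n2 : ℕ,
          (x ^ (n1 + n2) * y ^ n2 * q ^ (2 * Nat.choose n1 2 + 2 * n1 * n2 + n1 + 3 * n2) /
              (qPoch (q ^ 2) (q ^ 2) n1 * qPoch (q ^ 2) (q ^ 2) n2) *
            (qPoch (y * q ^ 2) (q ^ 4) n1 / qPochInf (y * q ^ 2) (q ^ 4)) *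
            (qPochInf (x ^ 2 * y * q ^ 4) (q ^ 4) /
              qPoch (x ^ 2 * y * q ^ 4) (q ^ 4) n1 / qPochInf (x ^ 2 * q ^ 2) (q ^ 4))) :=
        tsum_congr fun n1 => tsum_congr fun n2 => step4 hq hx hy n1 n2
    _ = ∑' n1 : ℕ,
          (x ^ n1 * q ^ (2 * Nat.choose n1 2 + n1) / qPoch (q ^ 2) (q ^ 2) n1 *
            (qPoch (x * y * q ^ 3) (q ^ 2) n1 / qPochInf (x * y * q ^ 3) (q ^ 2)) *
            (qPoch (y * q ^ 2) (q ^ 4) n1 / qPochInf (y * q ^ 2) (q ^ 4)) *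
            (qPochInf (x ^ 2 * y * q ^ 4) (q ^ 4) /
              qPoch (x ^ 2 * y * q ^ 4) (q ^ 4) n1 / qPochInf (x ^ 2 * q ^ 2) (q ^ 4))) :=
        tsum_congr fun n1 => step5 hq hx hy n1 _ _
    _ = qPochInf (x ^ 2 * y * q ^ 4) (q ^ 4) /
          (qPochInf (x ^ 2 * q ^ 2) (q ^ 4) * qPochInf (x * y * q ^ 3) (q ^ 2) *
            qPochInf (y * q ^ 2) (q ^ 4)) *
        ∑' n : ℕ,
          x ^ n * q ^ (2 * Nat.choose n 2 + n) *
            qPoch (x * y * q ^ 3) (q ^ 2) n * qPoch (y * q ^ 2) (q ^ 4) n /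
            (qPoch (q ^ 2) (q ^ 2) n * qPoch (x ^ 2 * y * q ^ 4) (q ^ 4) n) := by
        rw [← tsum_mul_left]
        exact tsum_congr fun n => by ring
end
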